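/- Converse chain inequality at the relay: for any (m,n) source-channel code for the DM MABRC, with all random variables distributed according to the joint law induced by the source, the encoders, the causal relay function and the memoryless channel, the following holds: ∑_{i=1}^{n} I(X_{1,i}; Y_{3,i} | X_{2,i}, X_{3,i}) ≥ I(S1^m, W^m; Y3^n | S2^m, W3^m) ≥ H(S1^m | S2^m, W3^m) − H(S1^m | Y3^n, S2^m, W3^m). -/

import Mathlib

open scoped BigOperators
open Finset

noncomputable section
open scoped Classical

namespace Paper

def pr {Ω A : Type*} [Fintype Ω] (μ : Ω → ℝ) (X : Ω → A) (a : A) : ℝ :=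
  ∑ ω, if X ω = a then μ ω else 0

def Hent {Ω A : Type*} [Fintype Ω] [Fintype A] (μ : Ω → ℝ) (X : Ω → A) : ℝ :=
  - ∑ a, pr μ X a * Real.logb 2 (pr μ X a)

def condEnt {Ω A B : Type*} [Fintype Ω] [Fintype A] [Fintype B]
    (μ : Ω → ℝ) (X : Ω → A) (Y : Ω → B) : ℝ :=
  Hent μ (fun ω => (X ω, Y ω)) - Hent μ Y

def mutInfo {Ω A B : Type*} [Fintype Ω] [Fintype A] [Fintype B]
    (μ : Ω → ℝ) (X : Ω → A) (Y : Ω → B) : ℝ :=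
  Hent μ X + Hent μ Y - Hent μ (fun ω => (X ω, Y ω))

def condMutInfo {Ω A B C : Type*} [Fintype Ω] [Fintype A] [Fintype B] [Fintype C]
    (μ : Ω → ℝ) (X : Ω → A) (Y : Ω → B) (Z : Ω → C) : ℝ :=
  condEnt μ X Z - condEnt μ X (fun ω => (Y ω, Z ω))

section Lemmas
set_option linter.unusedSectionVars false
variable {Ω A B C D : Type*} [Fintype Ω] [Fintype A] [Fintype B] [Fintype C] [Fintype D]
variable {μ : Ω → ℝ}

lemma pr_nonneg (hμ : ∀ ω, 0 ≤ μ ω) (X : Ω → A) (a : A) : 0 ≤ pr μ X a := by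
  unfold pr
  exact Finset.sum_nonneg fun ω _ => by split <;> simp [hμ ω]

lemma sum_pr (X : Ω → A) : ∑ a, pr μ X a = ∑ ω, μ ω := by
  unfold pr
  rw [Finset.sum_comm]
  exact Finset.sum_congr rfl fun ω _ => by simp

lemma pr_comp (f : A → B) (X : Ω → A) (b : B) :
    pr μ (fun ω => f (X ω)) b = ∑ a, if f a = b then pr μ X a else 0 := by
  unfold pr
  have h : ∀ a, (if f a = b then ∑ ω, if X ω = a then μ ω else 0 else 0)
      = ∑ ω, if f a = b ∧ X ω = a then μ ω else 0 := by
    intro a; split_ifs with h <;> simp [h]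
  rw [Finset.sum_congr rfl fun a _ => h a, Finset.sum_comm]
  refine Finset.sum_congr rfl fun ω _ => ?_
  rw [Finset.sum_eq_single (X ω)]
  · simp
  · intro a _ ha
    rw [if_neg]; rintro ⟨-, h2⟩; exact ha h2.symm
  · simp

lemma pr_comp' (f : A → B) (X : Ω → A) (Xf : Ω → B) (hXf : ∀ ω, Xf ω = f (X ω)) (b : B) :
    pr μ Xf b = ∑ a, if f a = b then pr μ X a else 0 := by
  rw [show Xf = fun ω => f (X ω) from funext hXf]
  exact pr_comp f X b

lemma pr_comp_inj {f : A → B} (hf : Function.Injective f) (X : Ω → A) (a : A) :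
    pr μ (fun ω => f (X ω)) (f a) = pr μ X a := by
  unfold pr
  exact Finset.sum_congr rfl fun ω _ => by rw [hf.eq_iff]

lemma pr_comp_not_mem {f : A → B} (X : Ω → A) {b : B} (hb : ∀ a, f a ≠ b) :
    pr μ (fun ω => f (X ω)) b = 0 := by
  unfold pr
  exact Finset.sum_eq_zero fun ω _ => if_neg (hb _)

lemma Hent_comp_inj {f : A → B} (hf : Function.Injective f) (X : Ω → A) :
    Hent μ (fun ω => f (X ω)) = Hent μ X := by
  unfold Hent
  congr 1
  rw [← Finset.sum_subset (Finset.subset_univ ((univ : Finset A).image f))]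
  · rw [Finset.sum_image (fun a _ a' _ h => hf h)]
    exact Finset.sum_congr rfl fun a _ => by rw [pr_comp_inj hf]
  · intro b _ hb
    have : pr μ (fun ω => f (X ω)) b = 0 := by
      refine pr_comp_not_mem X fun a hfa => ?_
      exact hb (Finset.mem_image.2 ⟨a, Finset.mem_univ a, hfa⟩)
    simp [this]

lemma Hent_eq_of_inj (T : Ω → C) (f : C → A) (g : C → B)
    (hf : Function.Injective f) (hg : Function.Injective g) :
    Hent μ (fun ω => f (T ω)) = Hent μ (fun ω => g (T ω)) :=
  (Hent_comp_inj hf T).trans (Hent_comp_inj hg T).symm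

lemma condEnt_comp_inj (X : Ω → A) {e : B → C} (he : Function.Injective e) (V : Ω → B) :
    condEnt μ X (fun ω => e (V ω)) = condEnt μ X V := by
  unfold condEnt
  have h1 : Hent μ (fun ω => e (V ω)) = Hent μ V := Hent_comp_inj he V
  have h2 : Hent μ (fun ω => (X ω, e (V ω)))
      = Hent μ (fun ω => (X ω, V ω)) := by
    have hinj : Function.Injective (fun p : A × B => (p.1, e p.2)) := by
      rintro ⟨a, b⟩ ⟨a', b'⟩ h
      simp only [Prod.mk.injEq] at h ⊢
      exact ⟨h.1, he h.2⟩
    exact Hent_comp_inj hinj (fun ω => (X ω, V ω))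
  rw [h1, h2]

lemma pr_pair_marg (Yv : Ω → B) (V : Ω → A) (a : A) :
    ∑ b, pr μ (fun ω => (Yv ω, V ω)) (b, a) = pr μ V a := by
  unfold pr
  rw [Finset.sum_comm]
  refine Finset.sum_congr rfl fun ω _ => ?_
  rw [Finset.sum_eq_single (Yv ω)]
  · simp [Prod.ext_iff]
  · intro b _ hb
    refine if_neg fun h => hb ?_
    have := congrArg Prod.fst h
    simpa using this.symm
  · simp

lemma condEnt_kernel {V : Ω → A} {Yv : Ω → B} {q : A → B → ℝ}
    (h : ∀ b a, pr μ (fun ω => (Yv ω, V ω)) (b, a) = q a b * pr μ V a) :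
    condEnt μ Yv V = - ∑ a, pr μ V a * ∑ b, q a b * Real.logb 2 (q a b) := by
  unfold condEnt Hent
  have key : ∀ a, ∑ b,
      pr μ (fun ω => (Yv ω, V ω)) (b, a) * Real.logb 2 (pr μ (fun ω => (Yv ω, V ω)) (b, a))
      = pr μ V a * (∑ b, q a b * Real.logb 2 (q a b))
        + pr μ V a * Real.logb 2 (pr μ V a) := by
    intro a
    by_cases hpa : pr μ V a = 0
    · simp [h, hpa]
    · have hq1 : ∑ b, q a b = 1 := by
        have hm := pr_pair_marg (μ := μ) Yv V a
        simp only [h] at hm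
        rw [← Finset.sum_mul] at hm
        exact mul_right_cancel₀ hpa (hm.trans (one_mul (pr μ V a)).symm)
      have : ∀ b, pr μ (fun ω => (Yv ω, V ω)) (b, a) *
            Real.logb 2 (pr μ (fun ω => (Yv ω, V ω)) (b, a))
          = pr μ V a * (q a b * Real.logb 2 (q a b))
            + q a b * (pr μ V a * Real.logb 2 (pr μ V a)) := by
        intro b
        rw [h]
        by_cases hqb : q a b = 0
        · simp [hqb]
        · rw [Real.logb_mul hqb hpa]; ring
      rw [Finset.sum_congr rfl fun b _ => this b, Finset.sum_add_distrib,
        ← Finset.mul_sum, ← Finset.sum_mul, hq1, one_mul]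
  have hBA : ∑ p : B × A,
      pr μ (fun ω => (Yv ω, V ω)) p * Real.logb 2 (pr μ (fun ω => (Yv ω, V ω)) p)
      = ∑ a, ∑ b,
        pr μ (fun ω => (Yv ω, V ω)) (b, a) * Real.logb 2 (pr μ (fun ω => (Yv ω, V ω)) (b, a)) := by
    rw [Fintype.sum_prod_type, Finset.sum_comm]
  rw [hBA, Finset.sum_congr rfl fun a _ => key a, Finset.sum_add_distrib]
  ring

lemma condEnt_eq_comp_kernel {V : Ω → A} {Yv : Ω → B} {g : A → C} {q : C → B → ℝ}
    (h : ∀ b a, pr μ (fun ω => (Yv ω, V ω)) (b, a) = q (g a) b * pr μ V a) :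
    condEnt μ Yv V = condEnt μ Yv (fun ω => g (V ω)) := by
  have hgV : ∀ d, pr μ (fun ω => g (V ω)) d = ∑ a, if g a = d then pr μ V a else 0 :=
    fun d => pr_comp g V d
  have h2 : ∀ b d, pr μ (fun ω => (Yv ω, g (V ω))) (b, d)
      = q d b * pr μ (fun ω => g (V ω)) d := by
    intro b d
    rw [hgV d, Finset.mul_sum]
    have hc := pr_comp' (μ := μ) (fun p : B × A => (p.1, g p.2))
      (fun ω => (Yv ω, V ω)) (fun ω => (Yv ω, g (V ω))) (fun ω => rfl) ((b, d))
    rw [hc, Fintype.sum_prod_type]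
    rw [Finset.sum_eq_single b]
    · refine Finset.sum_congr rfl fun a _ => ?_
      by_cases hga : g a = d
      · simp [hga, h b a]
      · simp [hga, Prod.ext_iff]
    · intro b' _ hb'
      refine Finset.sum_eq_zero fun a _ => if_neg fun hp => ?_
      have := congrArg Prod.fst hp
      exact hb' (by simpa using this)
    · simp
  rw [condEnt_kernel (q := fun a b => q (g a) b) h, condEnt_kernel (q := q) h2]
  congr 1
  have hrw : ∀ d : C, pr μ (fun ω => g (V ω)) d * (∑ b, q d b * Real.logb 2 (q d b))
      = ∑ a, (if g a = d then pr μ V a else 0) * (∑ b, q d b * Real.logb 2 (q d b)) := by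
    intro d; rw [hgV d, Finset.sum_mul]
  rw [Finset.sum_congr rfl fun d _ => hrw d, Finset.sum_comm]
  refine Finset.sum_congr rfl fun a _ => ?_
  rw [Finset.sum_eq_single (g a)]
  · simp
  · intro d _ hd
    rw [if_neg fun h' => hd h'.symm, zero_mul]
  · simp


lemma sum_comm3 {α β γ : Type*} [Fintype α] [Fintype β] [Fintype γ]
    (f : α → β → γ → ℝ) :
    ∑ y : β, ∑ z : γ, ∑ x : α, f x y z = ∑ x, ∑ y, ∑ z, f x y z :=
  calc ∑ y : β, ∑ z : γ, ∑ x : α, f x y z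
      = ∑ y : β, ∑ x : α, ∑ z : γ, f x y z :=
        Finset.sum_congr rfl fun y _ => Finset.sum_comm
    _ = ∑ x, ∑ y, ∑ z, f x y z := Finset.sum_comm

lemma sum_comm3' {α β γ : Type*} [Fintype α] [Fintype β] [Fintype γ]
    (f : α → β → γ → ℝ) :
    ∑ z : γ, ∑ x : α, ∑ y : β, f x y z = ∑ x, ∑ y, ∑ z, f x y z :=
  calc ∑ z : γ, ∑ x : α, ∑ y : β, f x y z
      = ∑ x : α, ∑ z : γ, ∑ y : β, f x y z := Finset.sum_comm
    _ = ∑ x, ∑ y, ∑ z, f x y z :=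
        Finset.sum_congr rfl fun x _ => Finset.sum_comm

lemma gibbs_aux {A B C : Type*} [Fintype A] [Fintype B] [Fintype C]
    (t : A × B × C → ℝ) (htnn : ∀ p, 0 ≤ t p) (hts : ∑ p, t p = 1) :
    ∑ x, ∑ z, ((∑ y, t (x, y, z)) * Real.logb 2 (∑ y, t (x, y, z)))
      + ∑ y, ∑ z, ((∑ x, t (x, y, z)) * Real.logb 2 (∑ x, t (x, y, z)))
    ≤ (∑ p, t p * Real.logb 2 (t p))
      + ∑ z, ((∑ x, ∑ y, t (x, y, z)) * Real.logb 2 (∑ x, ∑ y, t (x, y, z))) := by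
  have hlog2 : (0:ℝ) < Real.log 2 := Real.log_pos one_lt_two
  have hanng : ∀ x z, 0 ≤ ∑ y, t (x, y, z) :=
    fun x z => Finset.sum_nonneg fun y _ => htnn _
  have hbnng : ∀ y z, 0 ≤ ∑ x, t (x, y, z) :=
    fun y z => Finset.sum_nonneg fun x _ => htnn _
  have hcnng : ∀ z, 0 ≤ ∑ x, ∑ y, t (x, y, z) :=
    fun z => Finset.sum_nonneg fun x _ => hanng x z
  have hta : ∀ x y z, t (x, y, z) ≤ ∑ y', t (x, y', z) :=
    fun x y z => Finset.single_le_sum (f := fun y' => t (x, y', z))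
      (fun y' _ => htnn _) (Finset.mem_univ y)
  have htb : ∀ x y z, t (x, y, z) ≤ ∑ x', t (x', y, z) :=
    fun x y z => Finset.single_le_sum (f := fun x' => t (x', y, z))
      (fun x' _ => htnn _) (Finset.mem_univ x)
  have htc : ∀ x y z, t (x, y, z) ≤ ∑ x', ∑ y', t (x', y', z) := by
    intro x y z
    exact le_trans (hta x y z) (Finset.single_le_sum (fun x' _ => hanng x' z) (Finset.mem_univ x))
  -- rewrite the four sums as triple sums
  have haL : ∑ x, ∑ z, ((∑ y, t (x, y, z)) * Real.logb 2 (∑ y, t (x, y, z)))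
      = ∑ x, ∑ y, ∑ z, t (x, y, z) * Real.logb 2 (∑ y', t (x, y', z)) := by
    refine Finset.sum_congr rfl fun x _ => ?_
    rw [Finset.sum_comm]
    exact Finset.sum_congr rfl fun z _ => Finset.sum_mul _ _ _
  have hbL : ∑ y, ∑ z, ((∑ x, t (x, y, z)) * Real.logb 2 (∑ x, t (x, y, z)))
      = ∑ x, ∑ y, ∑ z, t (x, y, z) * Real.logb 2 (∑ x', t (x', y, z)) := by
    rw [← sum_comm3 (fun x y z => t (x, y, z) * Real.logb 2 (∑ x', t (x', y, z)))]
    refine Finset.sum_congr rfl fun y _ => Finset.sum_congr rfl fun z _ => ?_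
    exact Finset.sum_mul _ _ _
  have hcL : ∑ z, ((∑ x, ∑ y, t (x, y, z)) * Real.logb 2 (∑ x, ∑ y, t (x, y, z)))
      = ∑ x, ∑ y, ∑ z, t (x, y, z) * Real.logb 2 (∑ x', ∑ y', t (x', y', z)) := by
    rw [← sum_comm3' (fun x y z => t (x, y, z) * Real.logb 2 (∑ x', ∑ y', t (x', y', z)))]
    refine Finset.sum_congr rfl fun z _ => ?_
    rw [Finset.sum_mul]
    exact Finset.sum_congr rfl fun x _ => Finset.sum_mul _ _ _
  have htL : (∑ p, t p * Real.logb 2 (t p))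
      = ∑ x, ∑ y, ∑ z, t (x, y, z) * Real.logb 2 (t (x, y, z)) := by
    rw [Fintype.sum_prod_type (f := fun p : A × B × C => t p * Real.logb 2 (t p))]
    exact Finset.sum_congr rfl fun x _ => by
      exact Fintype.sum_prod_type (f := fun p : B × C => t (x, p.1, p.2) * Real.logb 2 (t (x, p.1, p.2)))
  have htsum3 : ∑ x, ∑ y, ∑ z, t (x, y, z) = 1 := by
    rw [← hts, Fintype.sum_prod_type (f := fun p : A × B × C => t p)]
    exact (Finset.sum_congr rfl fun x _ => by
      exact Fintype.sum_prod_type (f := fun p : B × C => t (x, p.1, p.2))).symm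
  rw [haL, hbL, hcL, htL]
  -- the pointwise lower bound
  set D : A × B × C → ℝ := fun p =>
    if 0 < t p then (∑ y', t (p.1, y', p.2.2)) * (∑ x', t (x', p.2.1, p.2.2))
        / (∑ x', ∑ y', t (x', y', p.2.2)) else 0 with hD
  have point : ∀ x y z,
      (t (x, y, z) - D (x, y, z)) / Real.log 2
      ≤ t (x, y, z) * Real.logb 2 (t (x, y, z))
        + t (x, y, z) * Real.logb 2 (∑ x', ∑ y', t (x', y', z))
        - t (x, y, z) * Real.logb 2 (∑ y', t (x, y', z))
        - t (x, y, z) * Real.logb 2 (∑ x', t (x', y, z)) := by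
    intro x y z
    by_cases hp : 0 < t (x, y, z)
    · have hat : 0 < ∑ y', t (x, y', z) := lt_of_lt_of_le hp (hta x y z)
      have hbt : 0 < ∑ x', t (x', y, z) := lt_of_lt_of_le hp (htb x y z)
      have hct : 0 < ∑ x', ∑ y', t (x', y', z) := lt_of_lt_of_le hp (htc x y z)
      have e1 : t (x, y, z) * Real.logb 2 (t (x, y, z))
          + t (x, y, z) * Real.logb 2 (∑ x', ∑ y', t (x', y', z))
          - t (x, y, z) * Real.logb 2 (∑ y', t (x, y', z))
          - t (x, y, z) * Real.logb 2 (∑ x', t (x', y, z))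
          = t (x, y, z) * Real.log (t (x, y, z) * (∑ x', ∑ y', t (x', y', z))
              / ((∑ y', t (x, y', z)) * (∑ x', t (x', y, z)))) / Real.log 2 := by
        simp only [Real.logb]
        rw [Real.log_div (by positivity) (by positivity),
          Real.log_mul (ne_of_gt hp) (ne_of_gt hct),
          Real.log_mul (ne_of_gt hat) (ne_of_gt hbt)]
        ring
      have e2 : 1 - ((∑ y', t (x, y', z)) * (∑ x', t (x', y, z)))
            / (t (x, y, z) * (∑ x', ∑ y', t (x', y', z)))
          ≤ Real.log (t (x, y, z) * (∑ x', ∑ y', t (x', y', z))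
              / ((∑ y', t (x, y', z)) * (∑ x', t (x', y, z)))) := by
        have h1 := Real.log_le_sub_one_of_pos
          (show (0:ℝ) < ((∑ y', t (x, y', z)) * (∑ x', t (x', y, z)))
            / (t (x, y, z) * (∑ x', ∑ y', t (x', y', z))) by positivity)
        have h2 : Real.log (((∑ y', t (x, y', z)) * (∑ x', t (x', y, z)))
              / (t (x, y, z) * (∑ x', ∑ y', t (x', y', z))))
            = - Real.log (t (x, y, z) * (∑ x', ∑ y', t (x', y', z))
              / ((∑ y', t (x, y', z)) * (∑ x', t (x', y, z)))) := by
          rw [Real.log_div (by positivity) (by positivity),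
            Real.log_div (by positivity) (by positivity)]
          ring
        rw [h2] at h1
        linarith
      have e3 : (t (x, y, z) - D (x, y, z)) / Real.log 2
          = t (x, y, z) * (1 - ((∑ y', t (x, y', z)) * (∑ x', t (x', y, z)))
            / (t (x, y, z) * (∑ x', ∑ y', t (x', y', z)))) / Real.log 2 := by
        simp only [hD, if_pos hp]
        congr 1
        field_simp
      rw [e1, e3]
      exact (div_le_div_iff_of_pos_right hlog2).mpr (mul_le_mul_of_nonneg_left e2 hp.le)
    · have ht0 : t (x, y, z) = 0 := le_antisymm (not_lt.1 hp) (htnn _)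
      simp [hD, ht0, hp]
  have sumD : ∑ x, ∑ y, ∑ z, D (x, y, z) ≤ 1 := by
    have step1 : ∀ x y z, D (x, y, z)
        ≤ (if 0 < ∑ x', ∑ y', t (x', y', z) then (∑ y', t (x, y', z)) * (∑ x', t (x', y, z))
            / (∑ x', ∑ y', t (x', y', z)) else 0) := by
      intro x y z
      simp only [hD]
      by_cases hp : 0 < t (x, y, z)
      · rw [if_pos hp, if_pos (lt_of_lt_of_le hp (htc x y z))]
      · rw [if_neg hp]
        split_ifs with h
        · exact div_nonneg (mul_nonneg (hanng x z) (hbnng y z)) h.le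
        · exact le_refl 0
    have step2 : ∑ x, ∑ y, ∑ z, D (x, y, z)
        ≤ ∑ x, ∑ y, ∑ z, (if 0 < ∑ x', ∑ y', t (x', y', z)
            then (∑ y', t (x, y', z)) * (∑ x', t (x', y, z)) / (∑ x', ∑ y', t (x', y', z))
            else 0) :=
      Finset.sum_le_sum fun x _ => Finset.sum_le_sum fun y _ => Finset.sum_le_sum fun z _ =>
        step1 x y z
    have step3 : ∑ x, ∑ y, ∑ z, (if 0 < ∑ x', ∑ y', t (x', y', z)
            then (∑ y', t (x, y', z)) * (∑ x', t (x', y, z)) / (∑ x', ∑ y', t (x', y', z))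
            else 0)
        = ∑ z, (if 0 < ∑ x', ∑ y', t (x', y', z) then (∑ x', ∑ y', t (x', y', z)) else 0) := by
      rw [← sum_comm3' (fun x y z => (if 0 < ∑ x', ∑ y', t (x', y', z)
            then (∑ y', t (x, y', z)) * (∑ x', t (x', y, z)) / (∑ x', ∑ y', t (x', y', z))
            else 0))]
      refine Finset.sum_congr rfl fun z _ => ?_
      by_cases hc : 0 < ∑ x', ∑ y', t (x', y', z)
      · simp only [if_pos hc]
        have e0 : ∀ x, ∑ y, (∑ y', t (x, y', z)) * (∑ x', t (x', y, z))
              / (∑ x', ∑ y', t (x', y', z))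
            = (∑ y', t (x, y', z)) * (∑ y, ∑ x', t (x', y, z))
              / (∑ x', ∑ y', t (x', y', z)) := by
          intro x
          rw [Finset.mul_sum, Finset.sum_div]
        rw [Finset.sum_congr rfl fun x _ => e0 x]
        have hswap : ∑ y, ∑ x', t (x', y, z) = ∑ x', ∑ y', t (x', y', z) :=
          Finset.sum_comm
        rw [hswap, ← Finset.sum_div, ← Finset.sum_mul, mul_div_assoc,
          div_self (ne_of_gt hc), mul_one]
      · simp only [if_neg hc]
        simp
    have step4 : ∑ z, (if 0 < ∑ x', ∑ y', t (x', y', z)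
          then (∑ x', ∑ y', t (x', y', z)) else 0)
        ≤ ∑ z, ∑ x', ∑ y', t (x', y', z) := by
      refine Finset.sum_le_sum fun z _ => ?_
      split
      · exact le_refl _
      · exact hcnng z
    have step5 : ∑ z, ∑ x', ∑ y', t (x', y', z) = 1 := by
      rw [sum_comm3' (fun x y z => t (x, y, z)), htsum3]
    calc ∑ x, ∑ y, ∑ z, D (x, y, z)
        ≤ ∑ z, (if 0 < ∑ x', ∑ y', t (x', y', z)
            then (∑ x', ∑ y', t (x', y', z)) else 0) := step2.trans (le_of_eq step3)
      _ ≤ 1 := step5 ▸ step4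
  have hpt : ∑ x, ∑ y, ∑ z, ((t (x, y, z) - D (x, y, z)) / Real.log 2)
      ≤ ∑ x, ∑ y, ∑ z, (t (x, y, z) * Real.logb 2 (t (x, y, z))
        + t (x, y, z) * Real.logb 2 (∑ x', ∑ y', t (x', y', z))
        - t (x, y, z) * Real.logb 2 (∑ y', t (x, y', z))
        - t (x, y, z) * Real.logb 2 (∑ x', t (x', y, z))) :=
    Finset.sum_le_sum fun x _ => Finset.sum_le_sum fun y _ => Finset.sum_le_sum fun z _ =>
      point x y z
  have e4 : ∑ x, ∑ y, ∑ z, ((t (x, y, z) - D (x, y, z)) / Real.log 2)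
      = (1 - ∑ x, ∑ y, ∑ z, D (x, y, z)) / Real.log 2 := by
    rw [← htsum3]
    simp only [← Finset.sum_div, ← Finset.sum_sub_distrib]
  have e5 : 0 ≤ (1 - ∑ x, ∑ y, ∑ z, D (x, y, z)) / Real.log 2 :=
    div_nonneg (by linarith [sumD]) hlog2.le
  have e6 : ∑ x, ∑ y, ∑ z, (t (x, y, z) * Real.logb 2 (t (x, y, z))
        + t (x, y, z) * Real.logb 2 (∑ x', ∑ y', t (x', y', z))
        - t (x, y, z) * Real.logb 2 (∑ y', t (x, y', z))
        - t (x, y, z) * Real.logb 2 (∑ x', t (x', y, z)))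
      = (∑ x, ∑ y, ∑ z, t (x, y, z) * Real.logb 2 (t (x, y, z)))
        + (∑ x, ∑ y, ∑ z, t (x, y, z) * Real.logb 2 (∑ x', ∑ y', t (x', y', z)))
        - (∑ x, ∑ y, ∑ z, t (x, y, z) * Real.logb 2 (∑ y', t (x, y', z)))
        - (∑ x, ∑ y, ∑ z, t (x, y, z) * Real.logb 2 (∑ x', t (x', y, z))) := by
    simp only [Finset.sum_add_distrib, Finset.sum_sub_distrib]
  linarith [hpt, e4, e5, e6]
lemma pr_triple_marg_y (X : Ω → A) (Y : Ω → B) (Z : Ω → C) (x : A) (z : C) :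
    ∑ y, pr μ (fun ω => (X ω, Y ω, Z ω)) (x, y, z) = pr μ (fun ω => (X ω, Z ω)) (x, z) := by
  unfold pr
  rw [Finset.sum_comm]
  refine Finset.sum_congr rfl fun ω _ => ?_
  rw [Finset.sum_eq_single (Y ω)]
  · simp [Prod.ext_iff]
  · intro y _ hy
    refine if_neg fun h => hy ?_
    have := congrArg (fun p : A × B × C => p.2.1) h
    simpa using this.symm
  · simp

lemma pr_triple_marg_x (X : Ω → A) (Y : Ω → B) (Z : Ω → C) (y : B) (z : C) :
    ∑ x, pr μ (fun ω => (X ω, Y ω, Z ω)) (x, y, z) = pr μ (fun ω => (Y ω, Z ω)) (y, z) := by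
  unfold pr
  rw [Finset.sum_comm]
  refine Finset.sum_congr rfl fun ω _ => ?_
  rw [Finset.sum_eq_single (X ω)]
  · simp [Prod.ext_iff]
  · intro x _ hx
    refine if_neg fun h => hx ?_
    have := congrArg (fun p : A × B × C => p.1) h
    simpa using this.symm
  · simp

lemma pr_triple_marg_xy (X : Ω → A) (Y : Ω → B) (Z : Ω → C) (z : C) :
    ∑ x, ∑ y, pr μ (fun ω => (X ω, Y ω, Z ω)) (x, y, z) = pr μ Z z := by
  have h1 : ∀ x, ∑ y, pr μ (fun ω => (X ω, Y ω, Z ω)) (x, y, z)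
      = pr μ (fun ω => (X ω, Z ω)) (x, z) := fun x => pr_triple_marg_y X Y Z x z
  rw [Finset.sum_congr rfl fun x _ => h1 x]
  exact pr_pair_marg X Z z

lemma condMutInfo_nonneg (hμ : ∀ ω, 0 ≤ μ ω) (hs : ∑ ω, μ ω = 1)
    (X : Ω → A) (Y : Ω → B) (Z : Ω → C) : 0 ≤ condMutInfo μ X Y Z := by
  have gibbs := gibbs_aux (pr μ (fun ω => (X ω, Y ω, Z ω)))
    (fun p => pr_nonneg hμ _ p) (by rw [sum_pr, hs])
  unfold condMutInfo condEnt Hent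
  have hXZ : ∑ p : A × C, pr μ (fun ω => (X ω, Z ω)) p
        * Real.logb 2 (pr μ (fun ω => (X ω, Z ω)) p)
      = ∑ x, ∑ z, ((∑ y, pr μ (fun ω => (X ω, Y ω, Z ω)) (x, y, z))
        * Real.logb 2 (∑ y, pr μ (fun ω => (X ω, Y ω, Z ω)) (x, y, z))) := by
    rw [Fintype.sum_prod_type (f := fun p : A × C => pr μ (fun ω => (X ω, Z ω)) p
      * Real.logb 2 (pr μ (fun ω => (X ω, Z ω)) p))]
    exact Finset.sum_congr rfl fun x _ => Finset.sum_congr rfl fun z _ => by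
      rw [pr_triple_marg_y X Y Z x z]
  have hYZ : ∑ p : B × C, pr μ (fun ω => (Y ω, Z ω)) p
        * Real.logb 2 (pr μ (fun ω => (Y ω, Z ω)) p)
      = ∑ y, ∑ z, ((∑ x, pr μ (fun ω => (X ω, Y ω, Z ω)) (x, y, z))
        * Real.logb 2 (∑ x, pr μ (fun ω => (X ω, Y ω, Z ω)) (x, y, z))) := by
    rw [Fintype.sum_prod_type (f := fun p : B × C => pr μ (fun ω => (Y ω, Z ω)) p
      * Real.logb 2 (pr μ (fun ω => (Y ω, Z ω)) p))]
    exact Finset.sum_congr rfl fun y _ => Finset.sum_congr rfl fun z _ => by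
      rw [pr_triple_marg_x X Y Z y z]
  have hZ : ∑ z, pr μ Z z * Real.logb 2 (pr μ Z z)
      = ∑ z, ((∑ x, ∑ y, pr μ (fun ω => (X ω, Y ω, Z ω)) (x, y, z))
        * Real.logb 2 (∑ x, ∑ y, pr μ (fun ω => (X ω, Y ω, Z ω)) (x, y, z))) := by
    exact Finset.sum_congr rfl fun z _ => by rw [pr_triple_marg_xy X Y Z z]
  rw [hXZ, hYZ, hZ]
  linarith [gibbs]

lemma condEnt_comp_le (hμ : ∀ ω, 0 ≤ μ ω) (hs : ∑ ω, μ ω = 1)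
    (X : Ω → A) (V : Ω → B) (g : B → C) :
    condEnt μ X V ≤ condEnt μ X (fun ω => g (V ω)) := by
  have h0 := condMutInfo_nonneg hμ hs X V (fun ω => g (V ω))
  unfold condMutInfo at h0
  have h1 : condEnt μ X (fun ω => (V ω, g (V ω))) = condEnt μ X V :=
    condEnt_comp_inj X (e := fun b : B => (b, g b))
      (fun b b' h => congrArg Prod.fst h) V
  linarith

end Lemmas

section Tele
variable {Y3 : Type*} [Fintype Y3]

def snocD {t : ℕ} (pfx : Fin t → Y3) (b : Y3) : Fin (t + 1) → Y3 :=
  fun j => if h : j.1 < t then pfx ⟨j.1, h⟩ else b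

lemma snocD_lt {t : ℕ} (pfx : Fin t → Y3) (b : Y3) (j : Fin (t + 1)) (h : j.1 < t) :
    snocD pfx b j = pfx ⟨j.1, h⟩ := dif_pos h

lemma snocD_ge {t : ℕ} (pfx : Fin t → Y3) (b : Y3) (j : Fin (t + 1)) (h : ¬ j.1 < t) :
    snocD pfx b j = b := dif_neg h

lemma Rcongr {n : ℕ} (R : (k : Fin n) → (Fin k.val → Y3) → Y3 → ℝ) (k : Fin n)
    {p p' : Fin k.val → Y3} (hp : ∀ l, p l = p' l) (v : Y3) : R k p v = R k p' v := by
  rw [funext hp]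

lemma tele {n : ℕ} (R : (k : Fin n) → (Fin k.val → Y3) → Y3 → ℝ)
    (hR : ∀ k h, ∑ b, R k h b = 1) :
    ∀ (d t : ℕ) (ht : t + d = n) (pfx : Fin t → Y3),
    (∑ y3 : Fin n → Y3,
      if ∀ j : Fin t, y3 ⟨j.1, by omega⟩ = pfx j
      then ∏ k : Fin n, R k (fun l => y3 ⟨l.1, Nat.lt_trans l.2 k.2⟩) (y3 k) else 0)
    = ∏ j : Fin t, R ⟨j.1, by omega⟩ (fun l => pfx ⟨l.1, Nat.lt_trans l.2 j.2⟩) (pfx j) := by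
  intro d
  induction d with
  | zero =>
    intro t ht pfx
    obtain rfl : t = n := by omega
    have h1 : ∀ y3 : Fin t → Y3, (∀ j : Fin t, y3 ⟨j.1, by omega⟩ = pfx j) ↔ y3 = pfx := by
      intro y3
      constructor
      · intro h; funext j; exact h j
      · rintro rfl j; rfl
    calc (∑ y3 : Fin t → Y3, if ∀ j : Fin t, y3 ⟨j.1, by omega⟩ = pfx j
          then ∏ k : Fin t, R k (fun l => y3 ⟨l.1, Nat.lt_trans l.2 k.2⟩) (y3 k) else 0)
        = ∑ y3 : Fin t → Y3, if y3 = pfx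
          then ∏ k : Fin t, R k (fun l => y3 ⟨l.1, Nat.lt_trans l.2 k.2⟩) (y3 k) else 0 :=
          Finset.sum_congr rfl fun y3 _ => if_congr (h1 y3) rfl rfl
      _ = ∏ k : Fin t, R k (fun l => pfx ⟨l.1, Nat.lt_trans l.2 k.2⟩) (pfx k) := by
          rw [Finset.sum_ite_eq' Finset.univ pfx]
          simp
      _ = ∏ j : Fin t, R ⟨j.1, by omega⟩ (fun l => pfx ⟨l.1, Nat.lt_trans l.2 j.2⟩) (pfx j) :=
          Finset.prod_congr rfl fun j _ => rfl
  | succ d ih =>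
    intro t ht pfx
    have htn : t < n := by omega
    have key : ∀ y3 : Fin n → Y3,
        (if ∀ j : Fin t, y3 ⟨j.1, by omega⟩ = pfx j
         then ∏ k : Fin n, R k (fun l => y3 ⟨l.1, Nat.lt_trans l.2 k.2⟩) (y3 k) else 0)
        = ∑ b, (if ∀ j : Fin (t + 1), y3 ⟨j.1, by omega⟩ = snocD pfx b j
         then ∏ k : Fin n, R k (fun l => y3 ⟨l.1, Nat.lt_trans l.2 k.2⟩) (y3 k) else 0) := by
      intro y3
      rw [Finset.sum_eq_single (y3 ⟨t, htn⟩)]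
      · refine (if_congr ?_ rfl rfl).symm
        constructor
        · intro h j
          have h2 := h ⟨j.1, by omega⟩
          rw [snocD_lt _ _ _ j.2] at h2
          exact h2
        · intro h j
          by_cases hj : j.1 < t
          · rw [snocD_lt _ _ _ hj]
            exact h ⟨j.1, hj⟩
          · rw [snocD_ge _ _ _ hj]
            have hjt : j.1 = t := by omega
            congr 1
            exact Fin.ext hjt
      · intro b _ hb
        refine if_neg fun h => hb ?_
        have h2 := h ⟨t, by omega⟩
        rw [snocD_ge _ _ _ (Nat.lt_irrefl t)] at h2
        exact h2.symm
      · simp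
    calc (∑ y3 : Fin n → Y3, if ∀ j : Fin t, y3 ⟨j.1, by omega⟩ = pfx j
          then ∏ k : Fin n, R k (fun l => y3 ⟨l.1, Nat.lt_trans l.2 k.2⟩) (y3 k) else 0)
        = ∑ y3 : Fin n → Y3, ∑ b, (if ∀ j : Fin (t + 1), y3 ⟨j.1, by omega⟩ = snocD pfx b j
            then ∏ k : Fin n, R k (fun l => y3 ⟨l.1, Nat.lt_trans l.2 k.2⟩) (y3 k) else 0) :=
          Finset.sum_congr rfl fun y3 _ => key y3
      _ = ∑ b, ∑ y3 : Fin n → Y3, (if ∀ j : Fin (t + 1), y3 ⟨j.1, by omega⟩ = snocD pfx b j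
            then ∏ k : Fin n, R k (fun l => y3 ⟨l.1, Nat.lt_trans l.2 k.2⟩) (y3 k) else 0) :=
          Finset.sum_comm
      _ = ∑ b, ∏ j : Fin (t + 1), R ⟨j.1, by omega⟩
            (fun l => snocD pfx b ⟨l.1, Nat.lt_trans l.2 j.2⟩) (snocD pfx b j) :=
          Finset.sum_congr rfl fun b _ => ih (t + 1) (by omega) (snocD pfx b)
      _ = ∑ b, (∏ j : Fin t, R ⟨j.1, by omega⟩
            (fun l => pfx ⟨l.1, Nat.lt_trans l.2 j.2⟩) (pfx j)) * R ⟨t, htn⟩ pfx b := by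
          refine Finset.sum_congr rfl fun b _ => ?_
          rw [Fin.prod_univ_castSucc]
          congr 1
          · refine Finset.prod_congr rfl fun j _ => ?_
            rw [show snocD pfx b j.castSucc = pfx j from snocD_lt _ _ _ j.2]
            exact Rcongr R _ (fun l => snocD_lt _ _ _ (Nat.lt_trans l.2 j.2)) _
          · rw [show snocD pfx b (Fin.last t) = b from snocD_ge _ _ _ (Nat.lt_irrefl t)]
            exact Rcongr R _ (fun l => snocD_lt _ _ _ l.2) _
      _ = ∏ j : Fin t, R ⟨j.1, by omega⟩
            (fun l => pfx ⟨l.1, Nat.lt_trans l.2 j.2⟩) (pfx j) := by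
          rw [← Finset.mul_sum, hR ⟨t, htn⟩ pfx, mul_one]

def prefMin {S Y Y' : Type*} {m n : ℕ} (t : ℕ)
    (ω : (Fin m → S) × (Fin n → Y) × (Fin n → Y')) : Fin (min t n) → Y' :=
  fun j => ω.2.2 ⟨j.1, Nat.lt_of_lt_of_le j.2 (min_le_right t n)⟩

end Tele


structure SourcePMF (S : Type) [Fintype S] where
  q : S → ℝ
  nonneg : ∀ s, 0 ≤ q s
  sum_one : ∑ s, q s = 1

/-- A discrete memoryless multiple-access (broadcast) relay channel. -/
structure DMMARC (X1 X2 X3 Y Y3 : Type) [Fintype X1] [Fintype X2] [Fintype X3]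
    [Fintype Y] [Fintype Y3] where
  P : X1 → X2 → X3 → Y → Y3 → ℝ
  nonneg : ∀ x1 x2 x3 y y3, 0 ≤ P x1 x2 x3 y y3
  sum_one : ∀ x1 x2 x3, ∑ y : Y, ∑ y3 : Y3, P x1 x2 x3 y y3 = 1

/-- An (m,n) source-channel code for the MABRC: two encoders, a causal relay
encoding function, a destination decoder and a relay decoder. -/
structure MABRCCode (S1 S2 W W3 X1 X2 X3 Y Y3 : Type) (m n : ℕ) where
  f1 : (Fin m → S1) → Fin n → X1
  f2 : (Fin m → S2) → Fin n → X2
  f3 : (k : Fin n) → (Fin k.val → Y3) → (Fin m → W3) → X3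
  g : (Fin n → Y) → (Fin m → W) → (Fin m → S1) × (Fin m → S2)
  g3 : (Fin n → Y3) → (Fin m → W3) → (Fin m → S1) × (Fin m → S2)

variable {S1 S2 W W3 X1 X2 X3 Y Y3 : Type} {m n : ℕ}

/-- The relay channel input at time `k` (causal function of past relay outputs and `W3^m`). -/
def relayIn (c : MABRCCode S1 S2 W W3 X1 X2 X3 Y Y3 m n)
    (y3 : Fin n → Y3) (w3 : Fin m → W3) (k : Fin n) : X3 :=
  c.f3 k (fun j => y3 ⟨j.val, j.isLt.trans k.isLt⟩) w3

section
variable [Fintype S1] [Fintype S2] [Fintype W] [Fintype W3]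
  [Fintype X1] [Fintype X2] [Fintype X3] [Fintype Y] [Fintype Y3]

/-- Joint law on (source sequences, destination outputs, relay outputs)
induced by the i.i.d. source, the encoders, the causal relay function and the
memoryless channel. -/
def mabrcLaw (src : SourcePMF (S1 × S2 × W × W3)) (ch : DMMARC X1 X2 X3 Y Y3)
    (c : MABRCCode S1 S2 W W3 X1 X2 X3 Y Y3 m n) :
    ((Fin m → S1 × S2 × W × W3) × (Fin n → Y) × (Fin n → Y3)) → ℝ :=
  fun ω => (∏ i, src.q (ω.1 i)) *
    ∏ k, ch.P (c.f1 (fun i => (ω.1 i).1) k) (c.f2 (fun i => (ω.1 i).2.1) k)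
      (relayIn c ω.2.2 (fun i => (ω.1 i).2.2.2) k) (ω.2.1 k) (ω.2.2 k)

/-- Error probability of a MABRC source-channel code: an error occurs if either
the destination or the relay fails to reconstruct both source sequences. -/
def mabrcErr (src : SourcePMF (S1 × S2 × W × W3)) (ch : DMMARC X1 X2 X3 Y Y3)
    (c : MABRCCode S1 S2 W W3 X1 X2 X3 Y Y3 m n) : ℝ :=
  ∑ ω : (Fin m → S1 × S2 × W × W3) × (Fin n → Y) × (Fin n → Y3),
    if c.g ω.2.1 (fun i => (ω.1 i).2.2.1) ≠ (fun i => (ω.1 i).1, fun i => (ω.1 i).2.1)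
        ∨ c.g3 ω.2.2 (fun i => (ω.1 i).2.2.2) ≠ (fun i => (ω.1 i).1, fun i => (ω.1 i).2.1)
    then mabrcLaw src ch c ω else 0

/-- Achievability of the source-channel rate `κ` for the DM MABRC. -/
def mabrcAchievable (src : SourcePMF (S1 × S2 × W × W3)) (ch : DMMARC X1 X2 X3 Y Y3)
    (κ : ℝ) : Prop :=
  ∀ ε : ℝ, 0 < ε → ∃ m0 n0 : ℕ, ∀ m n : ℕ, m0 < m → n0 < n → (n : ℝ) / m = κ →
    ∃ c : MABRCCode S1 S2 W W3 X1 X2 X3 Y Y3 m n, mabrcErr src ch c < ε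

end


section LawLemmas

variable {S1 S2 W W3 X1 X2 X3 Y Y3 : Type} {m n : ℕ}
  [Fintype S1] [Fintype S2] [Fintype W] [Fintype W3]
  [Fintype X1] [Fintype X2] [Fintype X3] [Fintype Y] [Fintype Y3]

lemma citeq {α : Sort*} {P Q : Prop} {hP : Decidable P} {hQ : Decidable Q} (x y : α)
    (h : P ↔ Q) : @ite α P hP x y = @ite α Q hQ x y := by
  cases hP with
  | isTrue h1 =>
    cases hQ with
    | isTrue h2 => rfl
    | isFalse h2 => exact absurd (h.mp h1) h2
  | isFalse h1 =>
    cases hQ with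
    | isTrue h2 => exact absurd (h.mpr h2) h1
    | isFalse h2 => rfl

def qk (ch : DMMARC X1 X2 X3 Y Y3) : X1 × X2 × X3 → Y3 → ℝ :=
  fun x b => ∑ y, ch.P x.1 x.2.1 x.2.2 y b

lemma qk_sum_one (ch : DMMARC X1 X2 X3 Y Y3) (x : X1 × X2 × X3) :
    ∑ b, qk ch x b = 1 := by
  unfold qk
  rw [Finset.sum_comm]
  exact ch.sum_one x.1 x.2.1 x.2.2

variable (src : SourcePMF (S1 × S2 × W × W3)) (ch : DMMARC X1 X2 X3 Y Y3)
  (c : MABRCCode S1 S2 W W3 X1 X2 X3 Y Y3 m n)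

lemma mabrcLaw_nonneg : ∀ ω, 0 ≤ mabrcLaw src ch c ω := by
  intro ω
  unfold mabrcLaw
  exact mul_nonneg (Finset.prod_nonneg fun i _ => src.nonneg _)
    (Finset.prod_nonneg fun k _ => ch.nonneg _ _ _ _ _)

lemma law_sum (sq : Fin m → S1 × S2 × W × W3) (F : (Fin n → Y3) → Prop) :
    (∑ p : (Fin n → Y) × (Fin n → Y3), if F p.2 then mabrcLaw src ch c (sq, p) else 0)
    = (∏ i, src.q (sq i)) * ∑ y3 : Fin n → Y3, (if F y3 then
        ∏ k : Fin n, qk ch (c.f1 (fun i => (sq i).1) k, c.f2 (fun i => (sq i).2.1) k,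
          relayIn c y3 (fun i => (sq i).2.2.2) k) (y3 k) else 0) :=
  calc (∑ p : (Fin n → Y) × (Fin n → Y3), if F p.2 then mabrcLaw src ch c (sq, p) else 0)
      = ∑ y : Fin n → Y, ∑ y3 : Fin n → Y3,
          (if F y3 then mabrcLaw src ch c (sq, y, y3) else 0) := by
        exact Fintype.sum_prod_type (f := fun p : (Fin n → Y) × (Fin n → Y3) =>
          if F p.2 then mabrcLaw src ch c (sq, p) else 0)
    _ = ∑ y3 : Fin n → Y3, ∑ y : Fin n → Y,
          (if F y3 then mabrcLaw src ch c (sq, y, y3) else 0) := Finset.sum_comm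
    _ = ∑ y3 : Fin n → Y3,
          (if F y3 then ∑ y : Fin n → Y, mabrcLaw src ch c (sq, y, y3) else 0) :=
        Finset.sum_congr rfl fun y3 _ => by by_cases hF : F y3 <;> simp [hF]
    _ = ∑ y3 : Fin n → Y3, (if F y3 then ((∏ i, src.q (sq i)) *
          ∏ k : Fin n, qk ch (c.f1 (fun i => (sq i).1) k, c.f2 (fun i => (sq i).2.1) k,
            relayIn c y3 (fun i => (sq i).2.2.2) k) (y3 k)) else 0) := by
        refine Finset.sum_congr rfl fun y3 _ => ?_
        by_cases hF : F y3
        · simp only [if_pos hF]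
          simp only [mabrcLaw]
          rw [← Finset.mul_sum]
          congr 1
          rw [← Fintype.prod_sum (f := fun (k : Fin n) (u : Y) =>
            ch.P (c.f1 (fun i => (sq i).1) k) (c.f2 (fun i => (sq i).2.1) k)
              (relayIn c y3 (fun i => (sq i).2.2.2) k) u (y3 k))]
          rfl
        · simp [hF]
    _ = (∏ i, src.q (sq i)) * ∑ y3 : Fin n → Y3, (if F y3 then
          ∏ k : Fin n, qk ch (c.f1 (fun i => (sq i).1) k, c.f2 (fun i => (sq i).2.1) k,
            relayIn c y3 (fun i => (sq i).2.2.2) k) (y3 k) else 0) := by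
        rw [Finset.mul_sum]
        exact Finset.sum_congr rfl fun y3 _ => by rw [mul_ite, mul_zero]

lemma mabrcLaw_sum_one :
    ∑ ω : (Fin m → S1 × S2 × W × W3) × (Fin n → Y) × (Fin n → Y3),
      mabrcLaw src ch c ω = 1 := by
  have h1 : ∀ sq : Fin m → S1 × S2 × W × W3,
      (∑ p : (Fin n → Y) × (Fin n → Y3), mabrcLaw src ch c (sq, p))
        = ∏ i, src.q (sq i) := by
    intro sq
    have h5 := law_sum src ch c sq (fun _ => True)
    simp only [if_true] at h5
    rw [h5]
    have h3 := tele (n := n) (R := fun k h b => qk ch (c.f1 (fun i => (sq i).1) k,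
        c.f2 (fun i => (sq i).2.1) k, c.f3 k h (fun i => (sq i).2.2.2)) b)
      (fun k h => qk_sum_one ch _) n 0 (by omega) (fun j => j.elim0)
    have h4 : (∑ y3 : Fin n → Y3,
        ∏ k : Fin n, qk ch (c.f1 (fun i => (sq i).1) k, c.f2 (fun i => (sq i).2.1) k,
          relayIn c y3 (fun i => (sq i).2.2.2) k) (y3 k)) = 1 := by
      refine Eq.trans ?_ (h3.trans ?_)
      · exact Finset.sum_congr rfl fun y3 _ => (if_pos fun j => j.elim0).symm
      · simp
    rw [h4, mul_one]
  calc ∑ ω : (Fin m → S1 × S2 × W × W3) × (Fin n → Y) × (Fin n → Y3), mabrcLaw src ch c ω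
      = ∑ sq : Fin m → S1 × S2 × W × W3, ∑ p : (Fin n → Y) × (Fin n → Y3),
          mabrcLaw src ch c (sq, p) := by
        exact Fintype.sum_prod_type
          (f := fun ω : (Fin m → S1 × S2 × W × W3) × (Fin n → Y) × (Fin n → Y3) =>
            mabrcLaw src ch c ω)
    _ = ∑ sq : Fin m → S1 × S2 × W × W3, ∏ i, src.q (sq i) :=
        Finset.sum_congr rfl fun sq _ => h1 sq
    _ = ∏ i : Fin m, ∑ s : S1 × S2 × W × W3, src.q s := by
        rw [← Fintype.prod_sum (f := fun (_ : Fin m) (s : S1 × S2 × W × W3) => src.q s)]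
    _ = 1 := Finset.prod_eq_one fun i _ => src.sum_one

lemma law_pr (τ : ℕ) (hτ : τ ≤ n) (sq : Fin m → S1 × S2 × W × W3) (pfx : Fin τ → Y3) :
    pr (mabrcLaw src ch c)
      (fun ω => (ω.1, fun j : Fin τ => ω.2.2 ⟨j.1, Nat.lt_of_lt_of_le j.2 hτ⟩)) (sq, pfx)
    = (∏ i, src.q (sq i)) * ∏ j : Fin τ,
        qk ch (c.f1 (fun i => (sq i).1) ⟨j.1, Nat.lt_of_lt_of_le j.2 hτ⟩,
          c.f2 (fun i => (sq i).2.1) ⟨j.1, Nat.lt_of_lt_of_le j.2 hτ⟩,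
          c.f3 ⟨j.1, Nat.lt_of_lt_of_le j.2 hτ⟩ (fun l => pfx ⟨l.1, Nat.lt_trans l.2 j.2⟩)
            (fun i => (sq i).2.2.2)) (pfx j) :=
  calc (pr (mabrcLaw src ch c)
        (fun ω => (ω.1, fun j : Fin τ => ω.2.2 ⟨j.1, Nat.lt_of_lt_of_le j.2 hτ⟩)) (sq, pfx))
      = ∑ a : Fin m → S1 × S2 × W × W3, ∑ p : (Fin n → Y) × (Fin n → Y3),
          (@ite ℝ ((a, fun j : Fin τ => p.2 ⟨j.1, Nat.lt_of_lt_of_le j.2 hτ⟩)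
              = ((sq, pfx) : (Fin m → S1 × S2 × W × W3) × (Fin τ → Y3)))
            (Classical.propDecidable _) (mabrcLaw src ch c (a, p)) 0) := by
        exact Fintype.sum_prod_type
          (f := fun ω : (Fin m → S1 × S2 × W × W3) × (Fin n → Y) × (Fin n → Y3) =>
            @ite ℝ ((ω.1, fun j : Fin τ => ω.2.2 ⟨j.1, Nat.lt_of_lt_of_le j.2 hτ⟩)
              = ((sq, pfx) : (Fin m → S1 × S2 × W × W3) × (Fin τ → Y3)))
            (Classical.propDecidable _) (mabrcLaw src ch c ω) 0)
    _ = ∑ p : (Fin n → Y) × (Fin n → Y3),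
          (@ite ℝ ((fun j : Fin τ => p.2 ⟨j.1, Nat.lt_of_lt_of_le j.2 hτ⟩) = pfx)
            (Classical.propDecidable _) (mabrcLaw src ch c (sq, p)) 0) := by
        rw [Finset.sum_eq_single sq]
        · refine Finset.sum_congr rfl fun p _ => citeq _ _ ?_
          constructor
          · intro h; exact congrArg Prod.snd h
          · intro h; exact Prod.ext_iff.mpr ⟨rfl, h⟩
        · intro a _ ha
          refine Finset.sum_eq_zero fun p _ => if_neg fun h => ha ?_
          exact congrArg Prod.fst h
        · simp
    _ = (∏ i, src.q (sq i)) * ∑ y3 : Fin n → Y3,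
          (@ite ℝ ((fun j : Fin τ => y3 ⟨j.1, Nat.lt_of_lt_of_le j.2 hτ⟩) = pfx)
            (Classical.propDecidable _)
            (∏ k : Fin n, qk ch (c.f1 (fun i => (sq i).1) k, c.f2 (fun i => (sq i).2.1) k,
             relayIn c y3 (fun i => (sq i).2.2.2) k) (y3 k)) 0) :=
        law_sum src ch c sq
          (fun y3 => (fun j : Fin τ => y3 ⟨j.1, Nat.lt_of_lt_of_le j.2 hτ⟩) = pfx)
    _ = (∏ i, src.q (sq i)) * ∑ y3 : Fin n → Y3,
          (if (∀ j : Fin τ, y3 ⟨j.1, Nat.lt_of_lt_of_le j.2 hτ⟩ = pfx j)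
           then ∏ k : Fin n, qk ch (c.f1 (fun i => (sq i).1) k, c.f2 (fun i => (sq i).2.1) k,
             relayIn c y3 (fun i => (sq i).2.2.2) k) (y3 k) else 0) := by
        refine congrArg _ (Finset.sum_congr rfl fun y3 _ => citeq _ _ ?_)
        exact ⟨fun h j => congrFun h j, fun h => funext h⟩
    _ = (∏ i, src.q (sq i)) * ∏ j : Fin τ,
        qk ch (c.f1 (fun i => (sq i).1) ⟨j.1, Nat.lt_of_lt_of_le j.2 hτ⟩,
          c.f2 (fun i => (sq i).2.1) ⟨j.1, Nat.lt_of_lt_of_le j.2 hτ⟩,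
          c.f3 ⟨j.1, Nat.lt_of_lt_of_le j.2 hτ⟩ (fun l => pfx ⟨l.1, Nat.lt_trans l.2 j.2⟩)
            (fun i => (sq i).2.2.2)) (pfx j) :=
        congrArg _ (tele (n := n) (R := fun k h b => qk ch (c.f1 (fun i => (sq i).1) k,
          c.f2 (fun i => (sq i).2.1) k, c.f3 k h (fun i => (sq i).2.2.2)) b)
          (fun k h => qk_sum_one ch _) (n - τ) τ (by omega) pfx)

lemma law_fact (τ : ℕ) (hτn : τ < n) (i : Fin n) (hi : i.1 = τ) (bv : Y3)
    (sq : Fin m → S1 × S2 × W × W3) (pfx : Fin τ → Y3) :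
    pr (mabrcLaw src ch c)
      (fun ω => (ω.2.2 i, (ω.1, fun j : Fin τ => ω.2.2 ⟨j.1, Nat.lt_trans j.2 hτn⟩)))
      (bv, (sq, pfx))
    = qk ch (c.f1 (fun i' => (sq i').1) i, c.f2 (fun i' => (sq i').2.1) i,
        c.f3 i (fun l => pfx ⟨l.1, hi ▸ l.2⟩) (fun i' => (sq i').2.2.2)) bv
      * pr (mabrcLaw src ch c)
        (fun ω => (ω.1, fun j : Fin τ => ω.2.2 ⟨j.1, Nat.lt_trans j.2 hτn⟩)) (sq, pfx) := by
  subst hi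
  calc (pr (mabrcLaw src ch c)
        (fun ω => (ω.2.2 i, (ω.1, fun j : Fin i.1 => ω.2.2 ⟨j.1, Nat.lt_trans j.2 hτn⟩)))
        (bv, (sq, pfx)))
      = ∑ a : Fin m → S1 × S2 × W × W3, ∑ p : (Fin n → Y) × (Fin n → Y3),
          (@ite ℝ ((p.2 i, (a, fun j : Fin i.1 => p.2 ⟨j.1, Nat.lt_trans j.2 hτn⟩))
              = ((bv, (sq, pfx)) : Y3 × ((Fin m → S1 × S2 × W × W3) × (Fin i.1 → Y3))))
            (Classical.propDecidable _) (mabrcLaw src ch c (a, p)) 0) := by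
        exact Fintype.sum_prod_type
          (f := fun ω : (Fin m → S1 × S2 × W × W3) × (Fin n → Y) × (Fin n → Y3) =>
            @ite ℝ ((ω.2.2 i, (ω.1, fun j : Fin i.1 => ω.2.2 ⟨j.1, Nat.lt_trans j.2 hτn⟩))
              = ((bv, (sq, pfx)) : Y3 × ((Fin m → S1 × S2 × W × W3) × (Fin i.1 → Y3))))
            (Classical.propDecidable _) (mabrcLaw src ch c ω) 0)
    _ = ∑ p : (Fin n → Y) × (Fin n → Y3),
          (@ite ℝ ((fun j : Fin (i.1 + 1) => p.2 ⟨j.1, Nat.lt_of_lt_of_le j.2 hτn⟩)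
              = snocD pfx bv)
            (Classical.propDecidable _) (mabrcLaw src ch c (sq, p)) 0) := by
        rw [Finset.sum_eq_single sq]
        · refine Finset.sum_congr rfl fun p _ => citeq _ _ ?_
          constructor
          · intro h
            funext j
            by_cases hj : j.1 < i.1
            · rw [snocD_lt _ _ _ hj]
              exact congrFun (congrArg
                (fun q : Y3 × ((Fin m → S1 × S2 × W × W3) × (Fin i.1 → Y3)) => q.2.2) h)
                ⟨j.1, hj⟩
            · rw [snocD_ge _ _ _ hj]
              have hj1 : j.1 = i.1 :=
                Nat.le_antisymm (Nat.lt_succ_iff.mp j.2) (Nat.le_of_not_lt hj)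
              exact (congrArg p.2 (Fin.ext hj1)).trans (congrArg Prod.fst h)
          · intro h
            have h1 : p.2 i = bv := by
              have h3 := congrFun h ⟨i.1, Nat.lt_succ_self i.1⟩
              rw [snocD_ge _ _ _ (Nat.lt_irrefl i.1)] at h3
              exact (congrArg p.2 (Fin.ext rfl)).trans h3
            have h2 : (fun j : Fin i.1 => p.2 ⟨j.1, Nat.lt_trans j.2 hτn⟩) = pfx := by
              funext j
              have h4 := congrFun h ⟨j.1, Nat.lt_succ_of_lt j.2⟩
              rw [snocD_lt _ _ _ j.2] at h4
              exact h4
            rw [h1, h2]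
        · intro a _ ha
          refine Finset.sum_eq_zero fun p _ => if_neg fun h => ha ?_
          exact congrArg (fun q : Y3 × ((Fin m → S1 × S2 × W × W3) × (Fin i.1 → Y3)) => q.2.1) h
        · simp
    _ = (∏ i', src.q (sq i')) * ∑ y3 : Fin n → Y3,
          (@ite ℝ ((fun j : Fin (i.1 + 1) => y3 ⟨j.1, Nat.lt_of_lt_of_le j.2 hτn⟩)
              = snocD pfx bv)
            (Classical.propDecidable _)
            (∏ k : Fin n, qk ch (c.f1 (fun i' => (sq i').1) k, c.f2 (fun i' => (sq i').2.1) k,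
              relayIn c y3 (fun i' => (sq i').2.2.2) k) (y3 k)) 0) :=
        law_sum src ch c sq
          (fun y3 => (fun j : Fin (i.1 + 1) => y3 ⟨j.1, Nat.lt_of_lt_of_le j.2 hτn⟩)
            = snocD pfx bv)
    _ = (∏ i', src.q (sq i')) * ∑ y3 : Fin n → Y3,
          (if (∀ j : Fin (i.1 + 1), y3 ⟨j.1, Nat.lt_of_lt_of_le j.2 hτn⟩ = snocD pfx bv j)
           then (∏ k : Fin n, qk ch (c.f1 (fun i' => (sq i').1) k,
             c.f2 (fun i' => (sq i').2.1) k,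
             relayIn c y3 (fun i' => (sq i').2.2.2) k) (y3 k)) else 0) := by
        refine congrArg _ (Finset.sum_congr rfl fun y3 _ => citeq _ _ ?_)
        exact ⟨fun h j => congrFun h j, fun h => funext h⟩
    _ = (∏ i', src.q (sq i')) * ∏ j : Fin (i.1 + 1),
          qk ch (c.f1 (fun i' => (sq i').1) ⟨j.1, Nat.lt_of_lt_of_le j.2 hτn⟩,
            c.f2 (fun i' => (sq i').2.1) ⟨j.1, Nat.lt_of_lt_of_le j.2 hτn⟩,
            c.f3 ⟨j.1, Nat.lt_of_lt_of_le j.2 hτn⟩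
              (fun l => snocD pfx bv ⟨l.1, Nat.lt_trans l.2 j.2⟩)
              (fun i' => (sq i').2.2.2)) (snocD pfx bv j) :=
        congrArg _ (tele (n := n) (R := fun k h b => qk ch (c.f1 (fun i' => (sq i').1) k,
          c.f2 (fun i' => (sq i').2.1) k, c.f3 k h (fun i' => (sq i').2.2.2)) b)
          (fun k h => qk_sum_one ch _) (n - (i.1 + 1)) (i.1 + 1) (by omega) (snocD pfx bv))
    _ = (∏ i', src.q (sq i')) * ((∏ j : Fin i.1,
          qk ch (c.f1 (fun i' => (sq i').1) ⟨j.1, Nat.lt_of_lt_of_le j.2 (Nat.le_of_lt hτn)⟩,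
            c.f2 (fun i' => (sq i').2.1) ⟨j.1, Nat.lt_of_lt_of_le j.2 (Nat.le_of_lt hτn)⟩,
            c.f3 ⟨j.1, Nat.lt_of_lt_of_le j.2 (Nat.le_of_lt hτn)⟩
              (fun l => pfx ⟨l.1, Nat.lt_trans l.2 j.2⟩)
              (fun i' => (sq i').2.2.2)) (pfx j))
          * qk ch (c.f1 (fun i' => (sq i').1) i, c.f2 (fun i' => (sq i').2.1) i,
              c.f3 i (fun l => pfx ⟨l.1, l.2⟩) (fun i' => (sq i').2.2.2)) bv) := by
        refine congrArg _ ?_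
        rw [Fin.prod_univ_castSucc]
        congr 1
        · refine Finset.prod_congr rfl fun j _ => ?_
          rw [show snocD pfx bv j.castSucc = pfx j from snocD_lt _ _ _ j.2]
          exact Rcongr (fun k h b => qk ch (c.f1 (fun i' => (sq i').1) k,
            c.f2 (fun i' => (sq i').2.1) k, c.f3 k h (fun i' => (sq i').2.2.2)) b) _
            (fun l => snocD_lt _ _ _ (Nat.lt_trans l.2 j.2)) _
        · rw [show snocD pfx bv (Fin.last i.1) = bv from snocD_ge _ _ _ (Nat.lt_irrefl i.1)]
          exact Rcongr (fun k h b => qk ch (c.f1 (fun i' => (sq i').1) k,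
            c.f2 (fun i' => (sq i').2.1) k, c.f3 k h (fun i' => (sq i').2.2.2)) b) _
            (fun l => snocD_lt _ _ _ l.2) _
    _ = qk ch (c.f1 (fun i' => (sq i').1) i, c.f2 (fun i' => (sq i').2.1) i,
          c.f3 i (fun l => pfx ⟨l.1, l.2⟩) (fun i' => (sq i').2.2.2)) bv
        * ((∏ i', src.q (sq i')) * ∏ j : Fin i.1,
          qk ch (c.f1 (fun i' => (sq i').1) ⟨j.1, Nat.lt_of_lt_of_le j.2 (Nat.le_of_lt hτn)⟩,
            c.f2 (fun i' => (sq i').2.1) ⟨j.1, Nat.lt_of_lt_of_le j.2 (Nat.le_of_lt hτn)⟩,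
            c.f3 ⟨j.1, Nat.lt_of_lt_of_le j.2 (Nat.le_of_lt hτn)⟩
              (fun l => pfx ⟨l.1, Nat.lt_trans l.2 j.2⟩)
              (fun i' => (sq i').2.2.2)) (pfx j)) := by ring
    _ = qk ch (c.f1 (fun i' => (sq i').1) i, c.f2 (fun i' => (sq i').2.1) i,
          c.f3 i (fun l => pfx ⟨l.1, l.2⟩) (fun i' => (sq i').2.2.2)) bv
        * pr (mabrcLaw src ch c)
          (fun ω => (ω.1, fun j : Fin i.1 => ω.2.2 ⟨j.1, Nat.lt_trans j.2 hτn⟩)) (sq, pfx) := by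
        rw [← law_pr src ch c i.1 (Nat.le_of_lt hτn) sq pfx]

set_option maxHeartbeats 1000000 in
lemma step_bound (src : SourcePMF (S1 × S2 × W × W3)) (ch : DMMARC X1 X2 X3 Y Y3)
    (c : MABRCCode S1 S2 W W3 X1 X2 X3 Y Y3 m n) (t : ℕ) (ht : t < n) :
    (Hent (mabrcLaw src ch c) (fun ω : (Fin m → S1 × S2 × W × W3) × (Fin n → Y) × (Fin n → Y3) => (prefMin (t + 1) ω, ((fun j => (ω.1 j).2.1), (fun j => (ω.1 j).2.2.2)))) - Hent (mabrcLaw src ch c) (fun ω : (Fin m → S1 × S2 × W × W3) × (Fin n → Y) × (Fin n → Y3) => (prefMin t ω, ((fun j => (ω.1 j).2.1), (fun j => (ω.1 j).2.2.2)))))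
      - (Hent (mabrcLaw src ch c) (fun ω : (Fin m → S1 × S2 × W × W3) × (Fin n → Y) × (Fin n → Y3) => (((fun j => (ω.1 j).1), (fun j => (ω.1 j).2.2.1)), (prefMin (t + 1) ω, ((fun j => (ω.1 j).2.1), (fun j => (ω.1 j).2.2.2))))) - Hent (mabrcLaw src ch c) (fun ω : (Fin m → S1 × S2 × W × W3) × (Fin n → Y) × (Fin n → Y3) => (((fun j => (ω.1 j).1), (fun j => (ω.1 j).2.2.1)), (prefMin t ω, ((fun j => (ω.1 j).2.1), (fun j => (ω.1 j).2.2.2))))))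
    ≤ condMutInfo (mabrcLaw src ch c) (fun ω : (Fin m → S1 × S2 × W × W3) × (Fin n → Y) × (Fin n → Y3) => c.f1 (fun j => (ω.1 j).1) ⟨t, ht⟩) (fun ω : (Fin m → S1 × S2 × W × W3) × (Fin n → Y) × (Fin n → Y3) => ω.2.2 ⟨t, ht⟩) (fun ω : (Fin m → S1 × S2 × W × W3) × (Fin n → Y) × (Fin n → Y3) => (c.f2 (fun j => (ω.1 j).2.1) ⟨t, ht⟩, relayIn c ω.2.2 (fun j => (ω.1 j).2.2.2) ⟨t, ht⟩)) := by
  have hμnn := mabrcLaw_nonneg src ch c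
  have hμ1 := mabrcLaw_sum_one src ch c
  -- relabel G(t+1) with the time-t output split off
  have e1 : Hent (mabrcLaw src ch c) (fun ω : (Fin m → S1 × S2 × W × W3) × (Fin n → Y) × (Fin n → Y3) => (prefMin (t + 1) ω, ((fun j => (ω.1 j).2.1), (fun j => (ω.1 j).2.2.2))))
      = Hent (mabrcLaw src ch c) (fun ω : (Fin m → S1 × S2 × W × W3) × (Fin n → Y) × (Fin n → Y3) => (ω.2.2 ⟨t, ht⟩, (prefMin t ω, ((fun j => (ω.1 j).2.1), (fun j => (ω.1 j).2.2.2))))) := by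
    refine (Hent_comp_inj (f := fun p : (Fin (min (t + 1) n) → Y3) × ((Fin m → S2) × (Fin m → W3)) =>
        (p.1 ⟨t, by omega⟩, ((fun j : Fin (min t n) => p.1 ⟨j.1, by omega⟩), p.2)))
      ?_ (fun ω : (Fin m → S1 × S2 × W × W3) × (Fin n → Y) × (Fin n → Y3) => (prefMin (t + 1) ω, ((fun j => (ω.1 j).2.1), (fun j => (ω.1 j).2.2.2))))).symm
    intro p q h
    have h1 : p.2 = q.2 := congrArg (fun r => r.2.2) h
    have h2 : ∀ j : Fin (min (t + 1) n), p.1 j = q.1 j := by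
      intro j
      rcases Nat.lt_or_ge j.1 t with hj | hj
      · exact congrFun (congrArg (fun r => r.2.1) h) ⟨j.1, by omega⟩
      · have hj2 := j.2
        have hjt : j.1 = t := by omega
        calc p.1 j = p.1 ⟨t, by omega⟩ := congrArg p.1 (Fin.ext hjt)
          _ = q.1 ⟨t, by omega⟩ := congrArg (fun r => r.1) h
          _ = q.1 j := (congrArg q.1 (Fin.ext hjt)).symm
    exact Prod.ext_iff.mpr ⟨funext h2, h1⟩
  have e2 : Hent (mabrcLaw src ch c) (fun ω : (Fin m → S1 × S2 × W × W3) × (Fin n → Y) × (Fin n → Y3) => (((fun j => (ω.1 j).1), (fun j => (ω.1 j).2.2.1)), (prefMin (t + 1) ω, ((fun j => (ω.1 j).2.1), (fun j => (ω.1 j).2.2.2)))))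
      = Hent (mabrcLaw src ch c) (fun ω : (Fin m → S1 × S2 × W × W3) × (Fin n → Y) × (Fin n → Y3) => (ω.2.2 ⟨t, ht⟩, (((fun j => (ω.1 j).1), (fun j => (ω.1 j).2.2.1)), (prefMin t ω, ((fun j => (ω.1 j).2.1), (fun j => (ω.1 j).2.2.2)))))) := by
    refine (Hent_comp_inj (f := fun p : ((Fin m → S1) × (Fin m → W)) ×
        ((Fin (min (t + 1) n) → Y3) × ((Fin m → S2) × (Fin m → W3))) =>
        (p.2.1 ⟨t, by omega⟩, (p.1, ((fun j : Fin (min t n) => p.2.1 ⟨j.1, by omega⟩), p.2.2))))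
      ?_ (fun ω : (Fin m → S1 × S2 × W × W3) × (Fin n → Y) × (Fin n → Y3) => (((fun j => (ω.1 j).1), (fun j => (ω.1 j).2.2.1)), (prefMin (t + 1) ω, ((fun j => (ω.1 j).2.1), (fun j => (ω.1 j).2.2.2)))))).symm
    intro p q h
    have h0 : p.1 = q.1 := congrArg (fun r => r.2.1) h
    have h1 : p.2.2 = q.2.2 := congrArg (fun r => r.2.2.2) h
    have h2 : ∀ j : Fin (min (t + 1) n), p.2.1 j = q.2.1 j := by
      intro j
      rcases Nat.lt_or_ge j.1 t with hj | hj
      · exact congrFun (congrArg (fun r => r.2.2.1) h) ⟨j.1, by omega⟩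
      · have hj2 := j.2
        have hjt : j.1 = t := by omega
        calc p.2.1 j = p.2.1 ⟨t, by omega⟩ := congrArg p.2.1 (Fin.ext hjt)
          _ = q.2.1 ⟨t, by omega⟩ := congrArg (fun r => r.1) h
          _ = q.2.1 j := (congrArg q.2.1 (Fin.ext hjt)).symm
    exact Prod.ext_iff.mpr ⟨h0, Prod.ext_iff.mpr ⟨funext h2, h1⟩⟩
  -- (a) kernel step: condition on the full history equals condition on (X1,X2,X3)
  have ha1 : condEnt (mabrcLaw src ch c) (fun ω : (Fin m → S1 × S2 × W × W3) × (Fin n → Y) × (Fin n → Y3) => ω.2.2 ⟨t, ht⟩) (fun ω : (Fin m → S1 × S2 × W × W3) × (Fin n → Y) × (Fin n → Y3) => (((fun j => (ω.1 j).1), (fun j => (ω.1 j).2.2.1)), (prefMin t ω, ((fun j => (ω.1 j).2.1), (fun j => (ω.1 j).2.2.2)))))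
      = condEnt (mabrcLaw src ch c) (fun ω : (Fin m → S1 × S2 × W × W3) × (Fin n → Y) × (Fin n → Y3) => ω.2.2 ⟨t, ht⟩) (fun ω : (Fin m → S1 × S2 × W × W3) × (Fin n → Y) × (Fin n → Y3) => (ω.1, prefMin t ω)) := by
    refine condEnt_comp_inj _ (e := fun v : (Fin m → S1 × S2 × W × W3) × (Fin (min t n) → Y3) =>
      (((fun j => (v.1 j).1), (fun j => (v.1 j).2.2.1)),
        (v.2, ((fun j => (v.1 j).2.1), (fun j => (v.1 j).2.2.2))))) ?_
      (fun ω : (Fin m → S1 × S2 × W × W3) × (Fin n → Y) × (Fin n → Y3) => (ω.1, prefMin t ω))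
    intro v w h
    have hp : v.2 = w.2 := congrArg (fun r => r.2.1) h
    have h1 := congrArg (fun r => r.1.1) h
    have h2 := congrArg (fun r => r.1.2) h
    have h3 := congrArg (fun r => r.2.2.1) h
    have h4 := congrArg (fun r => r.2.2.2) h
    refine Prod.ext_iff.mpr ⟨funext fun j => ?_, hp⟩
    exact Prod.ext_iff.mpr ⟨congrFun h1 j, Prod.ext_iff.mpr ⟨congrFun h3 j,
      Prod.ext_iff.mpr ⟨congrFun h2 j, congrFun h4 j⟩⟩⟩
  have ha2 : condEnt (mabrcLaw src ch c) (fun ω : (Fin m → S1 × S2 × W × W3) × (Fin n → Y) × (Fin n → Y3) => ω.2.2 ⟨t, ht⟩) (fun ω : (Fin m → S1 × S2 × W × W3) × (Fin n → Y) × (Fin n → Y3) => (ω.1, prefMin t ω))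
      = condEnt (mabrcLaw src ch c) (fun ω : (Fin m → S1 × S2 × W × W3) × (Fin n → Y) × (Fin n → Y3) => ω.2.2 ⟨t, ht⟩) (fun ω : (Fin m → S1 × S2 × W × W3) × (Fin n → Y) × (Fin n → Y3) => (c.f1 (fun j => (ω.1 j).1) ⟨t, ht⟩, (c.f2 (fun j => (ω.1 j).2.1) ⟨t, ht⟩, relayIn c ω.2.2 (fun j => (ω.1 j).2.2.2) ⟨t, ht⟩))) := by
    refine condEnt_eq_comp_kernel (q := qk ch)
      (g := fun v : (Fin m → S1 × S2 × W × W3) × (Fin (min t n) → Y3) =>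
        (c.f1 (fun j => (v.1 j).1) ⟨t, ht⟩, c.f2 (fun j => (v.1 j).2.1) ⟨t, ht⟩,
          c.f3 ⟨t, ht⟩ (fun l => v.2 ⟨l.1, Nat.lt_of_lt_of_le l.2
            (le_min (le_refl t) (le_of_lt ht))⟩) (fun j => (v.1 j).2.2.2))) ?_
    intro b a
    exact law_fact src ch c (min t n) (by omega) ⟨t, ht⟩ (by omega : t = min t n) b a.1 a.2
  -- (b) conditioning reduces entropy
  have hb : condEnt (mabrcLaw src ch c) (fun ω : (Fin m → S1 × S2 × W × W3) × (Fin n → Y) × (Fin n → Y3) => ω.2.2 ⟨t, ht⟩) (fun ω : (Fin m → S1 × S2 × W × W3) × (Fin n → Y) × (Fin n → Y3) => (prefMin t ω, ((fun j => (ω.1 j).2.1), (fun j => (ω.1 j).2.2.2))))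
      ≤ condEnt (mabrcLaw src ch c) (fun ω : (Fin m → S1 × S2 × W × W3) × (Fin n → Y) × (Fin n → Y3) => ω.2.2 ⟨t, ht⟩) (fun ω : (Fin m → S1 × S2 × W × W3) × (Fin n → Y) × (Fin n → Y3) => (c.f2 (fun j => (ω.1 j).2.1) ⟨t, ht⟩, relayIn c ω.2.2 (fun j => (ω.1 j).2.2.2) ⟨t, ht⟩)) := by
    exact condEnt_comp_le hμnn hμ1 _ (fun ω : (Fin m → S1 × S2 × W × W3) × (Fin n → Y) × (Fin n → Y3) => (prefMin t ω, ((fun j => (ω.1 j).2.1), (fun j => (ω.1 j).2.2.2))))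
      (fun v : (Fin (min t n) → Y3) × ((Fin m → S2) × (Fin m → W3)) =>
        (c.f2 v.2.1 ⟨t, ht⟩, c.f3 ⟨t, ht⟩ (fun l => v.1 ⟨l.1, Nat.lt_of_lt_of_le l.2
          (le_min (le_refl t) (le_of_lt ht))⟩) v.2.2))
  -- (c) symmetry relabel
  have hc : Hent (mabrcLaw src ch c) (fun ω : (Fin m → S1 × S2 × W × W3) × (Fin n → Y) × (Fin n → Y3) => (c.f1 (fun j => (ω.1 j).1) ⟨t, ht⟩, (ω.2.2 ⟨t, ht⟩, (c.f2 (fun j => (ω.1 j).2.1) ⟨t, ht⟩, relayIn c ω.2.2 (fun j => (ω.1 j).2.2.2) ⟨t, ht⟩))))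
      = Hent (mabrcLaw src ch c) (fun ω : (Fin m → S1 × S2 × W × W3) × (Fin n → Y) × (Fin n → Y3) => (ω.2.2 ⟨t, ht⟩, (c.f1 (fun j => (ω.1 j).1) ⟨t, ht⟩, (c.f2 (fun j => (ω.1 j).2.1) ⟨t, ht⟩, relayIn c ω.2.2 (fun j => (ω.1 j).2.2.2) ⟨t, ht⟩)))) := by
    refine Hent_eq_of_inj (fun ω : (Fin m → S1 × S2 × W × W3) × (Fin n → Y) × (Fin n → Y3) => (c.f1 (fun j => (ω.1 j).1) ⟨t, ht⟩, (ω.2.2 ⟨t, ht⟩, (c.f2 (fun j => (ω.1 j).2.1) ⟨t, ht⟩, relayIn c ω.2.2 (fun j => (ω.1 j).2.2.2) ⟨t, ht⟩))))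
      (fun v => v) (fun v => (v.2.1, (v.1, v.2.2))) (fun a b h => h) ?_
    rintro ⟨a, b, z⟩ ⟨a', b', z'⟩ h
    simp only [Prod.mk.injEq] at h ⊢
    tauto
  -- expand everything to entropies and conclude
  have r1 : condMutInfo (mabrcLaw src ch c) (fun ω : (Fin m → S1 × S2 × W × W3) × (Fin n → Y) × (Fin n → Y3) => c.f1 (fun j => (ω.1 j).1) ⟨t, ht⟩) (fun ω : (Fin m → S1 × S2 × W × W3) × (Fin n → Y) × (Fin n → Y3) => ω.2.2 ⟨t, ht⟩) (fun ω : (Fin m → S1 × S2 × W × W3) × (Fin n → Y) × (Fin n → Y3) => (c.f2 (fun j => (ω.1 j).2.1) ⟨t, ht⟩, relayIn c ω.2.2 (fun j => (ω.1 j).2.2.2) ⟨t, ht⟩))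
      = (Hent (mabrcLaw src ch c) (fun ω : (Fin m → S1 × S2 × W × W3) × (Fin n → Y) × (Fin n → Y3) => (c.f1 (fun j => (ω.1 j).1) ⟨t, ht⟩, (c.f2 (fun j => (ω.1 j).2.1) ⟨t, ht⟩, relayIn c ω.2.2 (fun j => (ω.1 j).2.2.2) ⟨t, ht⟩))) - Hent (mabrcLaw src ch c) (fun ω : (Fin m → S1 × S2 × W × W3) × (Fin n → Y) × (Fin n → Y3) => (c.f2 (fun j => (ω.1 j).2.1) ⟨t, ht⟩, relayIn c ω.2.2 (fun j => (ω.1 j).2.2.2) ⟨t, ht⟩)))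
        - (Hent (mabrcLaw src ch c) (fun ω : (Fin m → S1 × S2 × W × W3) × (Fin n → Y) × (Fin n → Y3) => (c.f1 (fun j => (ω.1 j).1) ⟨t, ht⟩, (ω.2.2 ⟨t, ht⟩, (c.f2 (fun j => (ω.1 j).2.1) ⟨t, ht⟩, relayIn c ω.2.2 (fun j => (ω.1 j).2.2.2) ⟨t, ht⟩)))) - Hent (mabrcLaw src ch c) (fun ω : (Fin m → S1 × S2 × W × W3) × (Fin n → Y) × (Fin n → Y3) => (ω.2.2 ⟨t, ht⟩, (c.f2 (fun j => (ω.1 j).2.1) ⟨t, ht⟩, relayIn c ω.2.2 (fun j => (ω.1 j).2.2.2) ⟨t, ht⟩)))) := rfl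
  have r2 : condEnt (mabrcLaw src ch c) (fun ω : (Fin m → S1 × S2 × W × W3) × (Fin n → Y) × (Fin n → Y3) => ω.2.2 ⟨t, ht⟩) (fun ω : (Fin m → S1 × S2 × W × W3) × (Fin n → Y) × (Fin n → Y3) => (prefMin t ω, ((fun j => (ω.1 j).2.1), (fun j => (ω.1 j).2.2.2))))
      = Hent (mabrcLaw src ch c) (fun ω : (Fin m → S1 × S2 × W × W3) × (Fin n → Y) × (Fin n → Y3) => (ω.2.2 ⟨t, ht⟩, (prefMin t ω, ((fun j => (ω.1 j).2.1), (fun j => (ω.1 j).2.2.2))))) - Hent (mabrcLaw src ch c) (fun ω : (Fin m → S1 × S2 × W × W3) × (Fin n → Y) × (Fin n → Y3) => (prefMin t ω, ((fun j => (ω.1 j).2.1), (fun j => (ω.1 j).2.2.2)))) := rfl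
  have r3 : condEnt (mabrcLaw src ch c) (fun ω : (Fin m → S1 × S2 × W × W3) × (Fin n → Y) × (Fin n → Y3) => ω.2.2 ⟨t, ht⟩) (fun ω : (Fin m → S1 × S2 × W × W3) × (Fin n → Y) × (Fin n → Y3) => (c.f2 (fun j => (ω.1 j).2.1) ⟨t, ht⟩, relayIn c ω.2.2 (fun j => (ω.1 j).2.2.2) ⟨t, ht⟩))
      = Hent (mabrcLaw src ch c) (fun ω : (Fin m → S1 × S2 × W × W3) × (Fin n → Y) × (Fin n → Y3) => (ω.2.2 ⟨t, ht⟩, (c.f2 (fun j => (ω.1 j).2.1) ⟨t, ht⟩, relayIn c ω.2.2 (fun j => (ω.1 j).2.2.2) ⟨t, ht⟩))) - Hent (mabrcLaw src ch c) (fun ω : (Fin m → S1 × S2 × W × W3) × (Fin n → Y) × (Fin n → Y3) => (c.f2 (fun j => (ω.1 j).2.1) ⟨t, ht⟩, relayIn c ω.2.2 (fun j => (ω.1 j).2.2.2) ⟨t, ht⟩)) := rfl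
  have r4 : condEnt (mabrcLaw src ch c) (fun ω : (Fin m → S1 × S2 × W × W3) × (Fin n → Y) × (Fin n → Y3) => ω.2.2 ⟨t, ht⟩) (fun ω : (Fin m → S1 × S2 × W × W3) × (Fin n → Y) × (Fin n → Y3) => (((fun j => (ω.1 j).1), (fun j => (ω.1 j).2.2.1)), (prefMin t ω, ((fun j => (ω.1 j).2.1), (fun j => (ω.1 j).2.2.2)))))
      = Hent (mabrcLaw src ch c) (fun ω : (Fin m → S1 × S2 × W × W3) × (Fin n → Y) × (Fin n → Y3) => (ω.2.2 ⟨t, ht⟩, (((fun j => (ω.1 j).1), (fun j => (ω.1 j).2.2.1)), (prefMin t ω, ((fun j => (ω.1 j).2.1), (fun j => (ω.1 j).2.2.2)))))) - Hent (mabrcLaw src ch c) (fun ω : (Fin m → S1 × S2 × W × W3) × (Fin n → Y) × (Fin n → Y3) => (((fun j => (ω.1 j).1), (fun j => (ω.1 j).2.2.1)), (prefMin t ω, ((fun j => (ω.1 j).2.1), (fun j => (ω.1 j).2.2.2))))) := rfl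
  have r5 : condEnt (mabrcLaw src ch c) (fun ω : (Fin m → S1 × S2 × W × W3) × (Fin n → Y) × (Fin n → Y3) => ω.2.2 ⟨t, ht⟩) (fun ω : (Fin m → S1 × S2 × W × W3) × (Fin n → Y) × (Fin n → Y3) => (c.f1 (fun j => (ω.1 j).1) ⟨t, ht⟩, (c.f2 (fun j => (ω.1 j).2.1) ⟨t, ht⟩, relayIn c ω.2.2 (fun j => (ω.1 j).2.2.2) ⟨t, ht⟩)))
      = Hent (mabrcLaw src ch c) (fun ω : (Fin m → S1 × S2 × W × W3) × (Fin n → Y) × (Fin n → Y3) => (ω.2.2 ⟨t, ht⟩, (c.f1 (fun j => (ω.1 j).1) ⟨t, ht⟩, (c.f2 (fun j => (ω.1 j).2.1) ⟨t, ht⟩, relayIn c ω.2.2 (fun j => (ω.1 j).2.2.2) ⟨t, ht⟩)))) - Hent (mabrcLaw src ch c) (fun ω : (Fin m → S1 × S2 × W × W3) × (Fin n → Y) × (Fin n → Y3) => (c.f1 (fun j => (ω.1 j).1) ⟨t, ht⟩, (c.f2 (fun j => (ω.1 j).2.1) ⟨t, ht⟩, relayIn c ω.2.2 (fun j => (ω.1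 j).2.2.2) ⟨t, ht⟩))) := rfl
  have haa := ha1.trans ha2
  linarith [e1, e2, hb, hc, r1, r2, r3, r4, r5, haa]

end LawLemmas

section ChainIneq

variable {S1 S2 W W3 X1 X2 X3 Y Y3 : Type}
  [Fintype S1] [Fintype S2] [Fintype W] [Fintype W3]
  [Fintype X1] [Fintype X2] [Fintype X3] [Fintype Y] [Fintype Y3]

/-- Converse chain inequality at the relay
(key step in the proof of Proposition 2):
`∑_{i=1}^{n} I(X_{1,i};Y_{3,i}|X_{2,i},X_{3,i}) ≥ I(S1^m,W^m;Y3^n|S2^m,W3^m)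
  ≥ H(S1^m|S2^m,W3^m) − H(S1^m|Y3^n,S2^m,W3^m)`. -/
theorem mabrc_converse_chain_relay {m n : ℕ}
    (src : SourcePMF (S1 × S2 × W × W3)) (ch : DMMARC X1 X2 X3 Y Y3)
    (c : MABRCCode S1 S2 W W3 X1 X2 X3 Y Y3 m n) :
    (∑ i : Fin n, condMutInfo (mabrcLaw src ch c)
        (fun ω => c.f1 (fun j => (ω.1 j).1) i)
        (fun ω => ω.2.2 i)
        (fun ω => (c.f2 (fun j => (ω.1 j).2.1) i,
          relayIn c ω.2.2 (fun j => (ω.1 j).2.2.2) i))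
      ≥ condMutInfo (mabrcLaw src ch c)
        (fun ω => (fun j => (ω.1 j).1, fun j => (ω.1 j).2.2.1))
        (fun ω => ω.2.2)
        (fun ω => (fun j => (ω.1 j).2.1, fun j => (ω.1 j).2.2.2)))
    ∧ (condMutInfo (mabrcLaw src ch c)
        (fun ω => (fun j => (ω.1 j).1, fun j => (ω.1 j).2.2.1))
        (fun ω => ω.2.2)
        (fun ω => (fun j => (ω.1 j).2.1, fun j => (ω.1 j).2.2.2))
      ≥ condEnt (mabrcLaw src ch c) (fun ω => fun j => (ω.1 j).1)
          (fun ω => (fun j => (ω.1 j).2.1, fun j => (ω.1 j).2.2.2))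
        - condEnt (mabrcLaw src ch c) (fun ω => fun j => (ω.1 j).1)
          (fun ω => (ω.2.2, fun j => (ω.1 j).2.1, fun j => (ω.1 j).2.2.2))) := by
  constructor
  · -- Part 1: single-letterization at the relay
    have hs0 : (∑ i : Fin n, condMutInfo (mabrcLaw src ch c)
          (fun ω => c.f1 (fun j => (ω.1 j).1) i)
          (fun ω => ω.2.2 i)
          (fun ω => (c.f2 (fun j => (ω.1 j).2.1) i,
            relayIn c ω.2.2 (fun j => (ω.1 j).2.2.2) i)))
        = ∑ t ∈ Finset.range n, (fun t' => if h : t' < n then condMutInfo (mabrcLaw src ch c) (fun ω : (Fin m → S1 × S2 × W × W3) × (Fin n → Y) × (Fin n → Y3) => c.f1 (fun j => (ω.1 j).1) ⟨t', h⟩) (fun ω : (Fin m → S1 × S2 × W × W3) × (Fin n → Y) × (Fin n → Y3) => ω.2.2 ⟨t', h⟩) (fun ω : (Fin m → S1 × S2 × W × W3) × (Fin n → Y) × (Fin n → Y3) => (c.f2 (fun j => (ω.1 j).2.1) ⟨t', h⟩, relayIn c ω.2.2 (fun j => (ω.1 j).2.2.2) ⟨t', h⟩)) else 0) t := by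
      rw [← Fin.sum_univ_eq_sum_range]
      refine Finset.sum_congr rfl fun i _ => ?_
      rw [dif_pos i.isLt]
    have t1 : ∑ t ∈ Finset.range n, (Hent (mabrcLaw src ch c) (fun ω : (Fin m → S1 × S2 × W × W3) × (Fin n → Y) × (Fin n → Y3) => (prefMin (t + 1) ω, ((fun j => (ω.1 j).2.1), (fun j => (ω.1 j).2.2.2)))) - Hent (mabrcLaw src ch c) (fun ω : (Fin m → S1 × S2 × W × W3) × (Fin n → Y) × (Fin n → Y3) => (prefMin t ω, ((fun j => (ω.1 j).2.1), (fun j => (ω.1 j).2.2.2)))))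
        = Hent (mabrcLaw src ch c) (fun ω : (Fin m → S1 × S2 × W × W3) × (Fin n → Y) × (Fin n → Y3) => (prefMin n ω, ((fun j => (ω.1 j).2.1), (fun j => (ω.1 j).2.2.2))))
          - Hent (mabrcLaw src ch c) (fun ω : (Fin m → S1 × S2 × W × W3) × (Fin n → Y) × (Fin n → Y3) => (prefMin 0 ω, ((fun j => (ω.1 j).2.1), (fun j => (ω.1 j).2.2.2)))) :=
      Finset.sum_range_sub (f := fun t => Hent (mabrcLaw src ch c) (fun ω : (Fin m → S1 × S2 × W × W3) × (Fin n → Y) × (Fin n → Y3) => (prefMin t ω, ((fun j => (ω.1 j).2.1), (fun j => (ω.1 j).2.2.2))))) n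
    have t2 : ∑ t ∈ Finset.range n, (Hent (mabrcLaw src ch c) (fun ω : (Fin m → S1 × S2 × W × W3) × (Fin n → Y) × (Fin n → Y3) => (((fun j => (ω.1 j).1), (fun j => (ω.1 j).2.2.1)), (prefMin (t + 1) ω, ((fun j => (ω.1 j).2.1), (fun j => (ω.1 j).2.2.2))))) - Hent (mabrcLaw src ch c) (fun ω : (Fin m → S1 × S2 × W × W3) × (Fin n → Y) × (Fin n → Y3) => (((fun j => (ω.1 j).1), (fun j => (ω.1 j).2.2.1)), (prefMin t ω, ((fun j => (ω.1 j).2.1), (fun j => (ω.1 j).2.2.2))))))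
        = Hent (mabrcLaw src ch c) (fun ω : (Fin m → S1 × S2 × W × W3) × (Fin n → Y) × (Fin n → Y3) => (((fun j => (ω.1 j).1), (fun j => (ω.1 j).2.2.1)), (prefMin n ω, ((fun j => (ω.1 j).2.1), (fun j => (ω.1 j).2.2.2)))))
          - Hent (mabrcLaw src ch c) (fun ω : (Fin m → S1 × S2 × W × W3) × (Fin n → Y) × (Fin n → Y3) => (((fun j => (ω.1 j).1), (fun j => (ω.1 j).2.2.1)), (prefMin 0 ω, ((fun j => (ω.1 j).2.1), (fun j => (ω.1 j).2.2.2))))) :=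
      Finset.sum_range_sub (f := fun t => Hent (mabrcLaw src ch c) (fun ω : (Fin m → S1 × S2 × W × W3) × (Fin n → Y) × (Fin n → Y3) => (((fun j => (ω.1 j).1), (fun j => (ω.1 j).2.2.1)), (prefMin t ω, ((fun j => (ω.1 j).2.1), (fun j => (ω.1 j).2.2.2)))))) n
    have hemp : ∀ ω : (Fin m → S1 × S2 × W × W3) × (Fin n → Y) × (Fin n → Y3), prefMin 0 ω = (fun j : Fin (min 0 n) => (Fin.elim0 (Fin.cast (by omega) j) : Y3)) :=
      fun ω => funext fun j => absurd j.2 (by omega)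
    have g0 : Hent (mabrcLaw src ch c) (fun ω : (Fin m → S1 × S2 × W × W3) × (Fin n → Y) × (Fin n → Y3) => (prefMin 0 ω, ((fun j => (ω.1 j).2.1), (fun j => (ω.1 j).2.2.2))))
        = Hent (mabrcLaw src ch c) (fun ω : (Fin m → S1 × S2 × W × W3) × (Fin n → Y) × (Fin n → Y3) => ((fun j => (ω.1 j).2.1), (fun j => (ω.1 j).2.2.2))) :=
      calc Hent (mabrcLaw src ch c) (fun ω : (Fin m → S1 × S2 × W × W3) × (Fin n → Y) × (Fin n → Y3) => (prefMin 0 ω, ((fun j => (ω.1 j).2.1), (fun j => (ω.1 j).2.2.2))))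
          = Hent (mabrcLaw src ch c) (fun ω : (Fin m → S1 × S2 × W × W3) × (Fin n → Y) × (Fin n → Y3) => ((fun j : Fin (min 0 n) => (Fin.elim0 (Fin.cast (by omega) j) : Y3)), ((fun j => (ω.1 j).2.1), (fun j => (ω.1 j).2.2.2)))) := by
            refine congrArg _ (funext fun ω => ?_)
            rw [hemp ω]
        _ = Hent (mabrcLaw src ch c) (fun ω : (Fin m → S1 × S2 × W × W3) × (Fin n → Y) × (Fin n → Y3) => ((fun j => (ω.1 j).2.1), (fun j => (ω.1 j).2.2.2))) :=
            Hent_comp_inj (f := fun z : (Fin m → S2) × (Fin m → W3) => ((fun j : Fin (min 0 n) => (Fin.elim0 (Fin.cast (by omega) j) : Y3)), z))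
              (fun a b h => congrArg Prod.snd h) (fun ω : (Fin m → S1 × S2 × W × W3) × (Fin n → Y) × (Fin n → Y3) => ((fun j => (ω.1 j).2.1), (fun j => (ω.1 j).2.2.2)))
    have g0u : Hent (mabrcLaw src ch c) (fun ω : (Fin m → S1 × S2 × W × W3) × (Fin n → Y) × (Fin n → Y3) => (((fun j => (ω.1 j).1), (fun j => (ω.1 j).2.2.1)), (prefMin 0 ω, ((fun j => (ω.1 j).2.1), (fun j => (ω.1 j).2.2.2)))))
        = Hent (mabrcLaw src ch c) (fun ω : (Fin m → S1 × S2 × W × W3) × (Fin n → Y) × (Fin n → Y3) => (((fun j => (ω.1 j).1), (fun j => (ω.1 j).2.2.1)), ((fun j => (ω.1 j).2.1), (fun j => (ω.1 j).2.2.2)))) :=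
      calc Hent (mabrcLaw src ch c) (fun ω : (Fin m → S1 × S2 × W × W3) × (Fin n → Y) × (Fin n → Y3) => (((fun j => (ω.1 j).1), (fun j => (ω.1 j).2.2.1)), (prefMin 0 ω, ((fun j => (ω.1 j).2.1), (fun j => (ω.1 j).2.2.2)))))
          = Hent (mabrcLaw src ch c) (fun ω : (Fin m → S1 × S2 × W × W3) × (Fin n → Y) × (Fin n → Y3) => (((fun j => (ω.1 j).1), (fun j => (ω.1 j).2.2.1)), ((fun j : Fin (min 0 n) => (Fin.elim0 (Fin.cast (by omega) j) : Y3)), ((fun j => (ω.1 j).2.1), (fun j => (ω.1 j).2.2.2))))) := by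
            refine congrArg _ (funext fun ω => ?_)
            rw [hemp ω]
        _ = Hent (mabrcLaw src ch c) (fun ω : (Fin m → S1 × S2 × W × W3) × (Fin n → Y) × (Fin n → Y3) => (((fun j => (ω.1 j).1), (fun j => (ω.1 j).2.2.1)), ((fun j => (ω.1 j).2.1), (fun j => (ω.1 j).2.2.2)))) :=
            Hent_comp_inj (f := fun v : ((Fin m → S1) × (Fin m → W)) × ((Fin m → S2) × (Fin m → W3)) =>
              (v.1, ((fun j : Fin (min 0 n) => (Fin.elim0 (Fin.cast (by omega) j) : Y3)), v.2)))
              (fun a b h => by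
                have h1 := congrArg Prod.fst h
                have h2 := congrArg (fun r : ((Fin m → S1) × (Fin m → W)) ×
                  ((Fin (min 0 n) → Y3) × ((Fin m → S2) × (Fin m → W3))) => r.2.2) h
                exact Prod.ext_iff.mpr ⟨h1, h2⟩)
              (fun ω : (Fin m → S1 × S2 × W × W3) × (Fin n → Y) × (Fin n → Y3) => (((fun j => (ω.1 j).1), (fun j => (ω.1 j).2.2.1)), ((fun j => (ω.1 j).2.1), (fun j => (ω.1 j).2.2.2))))
    have gn : Hent (mabrcLaw src ch c) (fun ω : (Fin m → S1 × S2 × W × W3) × (Fin n → Y) × (Fin n → Y3) => (prefMin n ω, ((fun j => (ω.1 j).2.1), (fun j => (ω.1 j).2.2.2))))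
        = Hent (mabrcLaw src ch c) (fun ω : (Fin m → S1 × S2 × W × W3) × (Fin n → Y) × (Fin n → Y3) => (ω.2.2, ((fun j => (ω.1 j).2.1), (fun j => (ω.1 j).2.2.2)))) := by
      refine Hent_comp_inj (f := fun p : (Fin n → Y3) × ((Fin m → S2) × (Fin m → W3)) =>
        ((fun j : Fin (min n n) => p.1 ⟨j.1, Nat.lt_of_lt_of_le j.2 (Nat.le_of_eq (min_self n))⟩), p.2))
        ?_ (fun ω : (Fin m → S1 × S2 × W × W3) × (Fin n → Y) × (Fin n → Y3) => (ω.2.2, ((fun j => (ω.1 j).2.1), (fun j => (ω.1 j).2.2.2))))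
      intro p q h
      have hs := congrArg Prod.snd h
      have hf := congrArg Prod.fst h
      refine Prod.ext_iff.mpr ⟨funext fun j => ?_, hs⟩
      exact congrFun hf ⟨j.1, Nat.lt_of_lt_of_le j.2 (Nat.le_of_eq (min_self n).symm)⟩
    have gnu : Hent (mabrcLaw src ch c) (fun ω : (Fin m → S1 × S2 × W × W3) × (Fin n → Y) × (Fin n → Y3) => (((fun j => (ω.1 j).1), (fun j => (ω.1 j).2.2.1)), (prefMin n ω, ((fun j => (ω.1 j).2.1), (fun j => (ω.1 j).2.2.2)))))
        = Hent (mabrcLaw src ch c) (fun ω : (Fin m → S1 × S2 × W × W3) × (Fin n → Y) × (Fin n → Y3) => (((fun j => (ω.1 j).1), (fun j => (ω.1 j).2.2.1)), (ω.2.2, ((fun j => (ω.1 j).2.1), (fun j => (ω.1 j).2.2.2))))) := by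
      refine Hent_comp_inj (f := fun v : ((Fin m → S1) × (Fin m → W)) ×
          ((Fin n → Y3) × ((Fin m → S2) × (Fin m → W3))) =>
        (v.1, ((fun j : Fin (min n n) => v.2.1 ⟨j.1, Nat.lt_of_lt_of_le j.2 (Nat.le_of_eq (min_self n))⟩), v.2.2)))
        ?_ (fun ω : (Fin m → S1 × S2 × W × W3) × (Fin n → Y) × (Fin n → Y3) => (((fun j => (ω.1 j).1), (fun j => (ω.1 j).2.2.1)), (ω.2.2, ((fun j => (ω.1 j).2.1), (fun j => (ω.1 j).2.2.2)))))
      intro p q h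
      have h1 := congrArg Prod.fst h
      have h2 := congrArg (fun r : ((Fin m → S1) × (Fin m → W)) ×
        ((Fin (min n n) → Y3) × ((Fin m → S2) × (Fin m → W3))) => r.2.1) h
      have h3 := congrArg (fun r : ((Fin m → S1) × (Fin m → W)) ×
        ((Fin (min n n) → Y3) × ((Fin m → S2) × (Fin m → W3))) => r.2.2) h
      refine Prod.ext_iff.mpr ⟨h1, Prod.ext_iff.mpr ⟨funext fun j => ?_, h3⟩⟩
      exact congrFun h2 ⟨j.1, Nat.lt_of_lt_of_le j.2 (Nat.le_of_eq (min_self n).symm)⟩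
    have rr : condMutInfo (mabrcLaw src ch c)
          (fun ω => ((fun j => (ω.1 j).1), (fun j => (ω.1 j).2.2.1)))
          (fun ω => ω.2.2)
          (fun ω => ((fun j => (ω.1 j).2.1), (fun j => (ω.1 j).2.2.2)))
        = (Hent (mabrcLaw src ch c) (fun ω : (Fin m → S1 × S2 × W × W3) × (Fin n → Y) × (Fin n → Y3) => (((fun j => (ω.1 j).1), (fun j => (ω.1 j).2.2.1)), ((fun j => (ω.1 j).2.1), (fun j => (ω.1 j).2.2.2)))) - Hent (mabrcLaw src ch c) (fun ω : (Fin m → S1 × S2 × W × W3) × (Fin n → Y) × (Fin n → Y3) => ((fun j => (ω.1 j).2.1), (fun j => (ω.1 j).2.2.2))))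
          - (Hent (mabrcLaw src ch c) (fun ω : (Fin m → S1 × S2 × W × W3) × (Fin n → Y) × (Fin n → Y3) => (((fun j => (ω.1 j).1), (fun j => (ω.1 j).2.2.1)), (ω.2.2, ((fun j => (ω.1 j).2.1), (fun j => (ω.1 j).2.2.2)))))
            - Hent (mabrcLaw src ch c) (fun ω : (Fin m → S1 × S2 × W × W3) × (Fin n → Y) × (Fin n → Y3) => (ω.2.2, ((fun j => (ω.1 j).2.1), (fun j => (ω.1 j).2.2.2))))) := rfl
    have hsub : ∑ t ∈ Finset.range n, ((Hent (mabrcLaw src ch c) (fun ω : (Fin m → S1 × S2 × W × W3) × (Fin n → Y) × (Fin n → Y3) => (prefMin (t + 1) ω, ((fun j => (ω.1 j).2.1), (fun j => (ω.1 j).2.2.2)))) - Hent (mabrcLaw src ch c) (fun ω : (Fin m → S1 × S2 × W × W3) × (Fin n → Y) × (Fin n → Y3) => (prefMin t ω, ((fun j => (ω.1 j).2.1), (fun j => (ω.1 j).2.2.2))))) - (Hent (mabrcLaw src ch c) (fun ω : (Fin m → S1 × S2 × W × W3) × (Fin n → Y) × (Fin n → Y3) => (((fun j => (ω.1 j).1),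 (fun j => (ω.1 j).2.2.1)), (prefMin (t + 1) ω, ((fun j => (ω.1 j).2.1), (fun j => (ω.1 j).2.2.2))))) - Hent (mabrcLaw src ch c) (fun ω : (Fin m → S1 × S2 × W × W3) × (Fin n → Y) × (Fin n → Y3) => (((fun j => (ω.1 j).1), (fun j => (ω.1 j).2.2.1)), (prefMin t ω, ((fun j => (ω.1 j).2.1), (fun j => (ω.1 j).2.2.2)))))))
        = (∑ t ∈ Finset.range n, (Hent (mabrcLaw src ch c) (fun ω : (Fin m → S1 × S2 × W × W3) × (Fin n → Y) × (Fin n → Y3) => (prefMin (t + 1) ω, ((fun j => (ω.1 j).2.1), (fun j => (ω.1 j).2.2.2)))) - Hent (mabrcLaw src ch c) (fun ω : (Fin m → S1 × S2 × W × W3) × (Fin n → Y) × (Fin n → Y3) => (prefMin t ω, ((fun j => (ω.1 j).2.1), (fun j => (ω.1 j).2.2.2)))))) - ∑ t ∈ Finset.range n, (Hent (mabrcLaw src ch c) (fun ω : (Fin m → S1 × S2 × W × W3) × (Fin n → Y) × (Fin n → Y3) => (((fun j => (ω.1 j).1), (fun j => (ω.1 j).2.2.1)), (prefMin (t + 1)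 ω, ((fun j => (ω.1 j).2.1), (fun j => (ω.1 j).2.2.2))))) - Hent (mabrcLaw src ch c) (fun ω : (Fin m → S1 × S2 × W × W3) × (Fin n → Y) × (Fin n → Y3) => (((fun j => (ω.1 j).1), (fun j => (ω.1 j).2.2.1)), (prefMin t ω, ((fun j => (ω.1 j).2.1), (fun j => (ω.1 j).2.2.2)))))) :=
      Finset.sum_sub_distrib _ _
    have hle : ∑ t ∈ Finset.range n, ((Hent (mabrcLaw src ch c) (fun ω : (Fin m → S1 × S2 × W × W3) × (Fin n → Y) × (Fin n → Y3) => (prefMin (t + 1) ω, ((fun j => (ω.1 j).2.1), (fun j => (ω.1 j).2.2.2)))) - Hent (mabrcLaw src ch c) (fun ω : (Fin m → S1 × S2 × W × W3) × (Fin n → Y) × (Fin n → Y3) => (prefMin t ω, ((fun j => (ω.1 j).2.1), (fun j => (ω.1 j).2.2.2))))) - (Hent (mabrcLaw src ch c) (fun ω : (Fin m → S1 × S2 × W × W3) × (Fin n → Y) × (Fin n → Y3) => (((fun j => (ω.1 j).1), (fun j => (ω.1 j).2.2.1)), (prefMin (t + 1) ω, ((fun j => (ω.1 j).2.1), (fun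 j => (ω.1 j).2.2.2))))) - Hent (mabrcLaw src ch c) (fun ω : (Fin m → S1 × S2 × W × W3) × (Fin n → Y) × (Fin n → Y3) => (((fun j => (ω.1 j).1), (fun j => (ω.1 j).2.2.1)), (prefMin t ω, ((fun j => (ω.1 j).2.1), (fun j => (ω.1 j).2.2.2))))))) ≤ ∑ t ∈ Finset.range n, (fun t' => if h : t' < n then condMutInfo (mabrcLaw src ch c) (fun ω : (Fin m → S1 × S2 × W × W3) × (Fin n → Y) × (Fin n → Y3) => c.f1 (fun j => (ω.1 j).1) ⟨t', h⟩) (fun ω : (Fin m → S1 × S2 × W × W3) × (Fin n → Y) × (Fin n → Y3) => ω.2.2 ⟨t', h⟩) (fun ω : (Fin m → S1 × S2 × W × W3) × (Fin n → Y) × (Fin n → Y3) => (c.f2 (fun j => (ω.1 j).2.1) ⟨t', h⟩, relayIn c ω.2.2 (fun j => (ω.1 j).2.2.2) ⟨t', h⟩)) else 0) t := by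
      refine Finset.sum_le_sum fun t htm => ?_
      rw [dif_pos (Finset.mem_range.mp htm)]
      exact step_bound src ch c t (Finset.mem_range.mp htm)
    linarith [hs0, t1, t2, g0, g0u, gn, gnu, rr, hsub, hle]
  · -- Part 2: drop W from the mutual information
    have h0 := condMutInfo_nonneg (mabrcLaw_nonneg src ch c) (mabrcLaw_sum_one src ch c)
        (fun ω : (Fin m → S1 × S2 × W × W3) × (Fin n → Y) × (Fin n → Y3) => (fun j => (ω.1 j).2.2.1))
        (fun ω : (Fin m → S1 × S2 × W × W3) × (Fin n → Y) × (Fin n → Y3) => ω.2.2)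
        (fun ω : (Fin m → S1 × S2 × W × W3) × (Fin n → Y) × (Fin n → Y3) => ((fun j => (ω.1 j).1), ((fun j => (ω.1 j).2.1), (fun j => (ω.1 j).2.2.2))))
    have r1 : condMutInfo (mabrcLaw src ch c)
          (fun ω => ((fun j => (ω.1 j).1), (fun j => (ω.1 j).2.2.1)))
          (fun ω => ω.2.2)
          (fun ω => ((fun j => (ω.1 j).2.1), (fun j => (ω.1 j).2.2.2)))
        = (Hent (mabrcLaw src ch c) (fun ω : (Fin m → S1 × S2 × W × W3) × (Fin n → Y) × (Fin n → Y3) => (((fun j => (ω.1 j).1), (fun j => (ω.1 j).2.2.1)), ((fun j => (ω.1 j).2.1), (fun j => (ω.1 j).2.2.2)))) - Hent (mabrcLaw src ch c) (fun ω : (Fin m → S1 × S2 × W × W3) × (Fin n → Y) × (Fin n → Y3) => ((fun j => (ω.1 j).2.1), (fun j => (ω.1 j).2.2.2))))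
          - (Hent (mabrcLaw src ch c) (fun ω : (Fin m → S1 × S2 × W × W3) × (Fin n → Y) × (Fin n → Y3) => (((fun j => (ω.1 j).1), (fun j => (ω.1 j).2.2.1)), (ω.2.2, ((fun j => (ω.1 j).2.1), (fun j => (ω.1 j).2.2.2)))))
            - Hent (mabrcLaw src ch c) (fun ω : (Fin m → S1 × S2 × W × W3) × (Fin n → Y) × (Fin n → Y3) => (ω.2.2, ((fun j => (ω.1 j).2.1), (fun j => (ω.1 j).2.2.2))))) := rfl
    have r2 : condEnt (mabrcLaw src ch c) (fun ω => fun j => (ω.1 j).1) (fun ω => ((fun j => (ω.1 j).2.1), (fun j => (ω.1 j).2.2.2)))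
        = Hent (mabrcLaw src ch c) (fun ω : (Fin m → S1 × S2 × W × W3) × (Fin n → Y) × (Fin n → Y3) => ((fun j => (ω.1 j).1), ((fun j => (ω.1 j).2.1), (fun j => (ω.1 j).2.2.2)))) - Hent (mabrcLaw src ch c) (fun ω : (Fin m → S1 × S2 × W × W3) × (Fin n → Y) × (Fin n → Y3) => ((fun j => (ω.1 j).2.1), (fun j => (ω.1 j).2.2.2))) := rfl
    have r3 : condEnt (mabrcLaw src ch c) (fun ω => fun j => (ω.1 j).1) (fun ω => (ω.2.2, ((fun j => (ω.1 j).2.1), (fun j => (ω.1 j).2.2.2))))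
        = Hent (mabrcLaw src ch c) (fun ω : (Fin m → S1 × S2 × W × W3) × (Fin n → Y) × (Fin n → Y3) => ((fun j => (ω.1 j).1), (ω.2.2, ((fun j => (ω.1 j).2.1), (fun j => (ω.1 j).2.2.2)))))
          - Hent (mabrcLaw src ch c) (fun ω : (Fin m → S1 × S2 × W × W3) × (Fin n → Y) × (Fin n → Y3) => (ω.2.2, ((fun j => (ω.1 j).2.1), (fun j => (ω.1 j).2.2.2)))) := rfl
    have r4 : condMutInfo (mabrcLaw src ch c)
          (fun ω : (Fin m → S1 × S2 × W × W3) × (Fin n → Y) × (Fin n → Y3) => (fun j => (ω.1 j).2.2.1))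
          (fun ω : (Fin m → S1 × S2 × W × W3) × (Fin n → Y) × (Fin n → Y3) => ω.2.2)
          (fun ω : (Fin m → S1 × S2 × W × W3) × (Fin n → Y) × (Fin n → Y3) => ((fun j => (ω.1 j).1), ((fun j => (ω.1 j).2.1), (fun j => (ω.1 j).2.2.2))))
        = (Hent (mabrcLaw src ch c) (fun ω : (Fin m → S1 × S2 × W × W3) × (Fin n → Y) × (Fin n → Y3) => ((fun j => (ω.1 j).2.2.1), ((fun j => (ω.1 j).1), ((fun j => (ω.1 j).2.1), (fun j => (ω.1 j).2.2.2)))))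
            - Hent (mabrcLaw src ch c) (fun ω : (Fin m → S1 × S2 × W × W3) × (Fin n → Y) × (Fin n → Y3) => ((fun j => (ω.1 j).1), ((fun j => (ω.1 j).2.1), (fun j => (ω.1 j).2.2.2)))))
          - (Hent (mabrcLaw src ch c) (fun ω : (Fin m → S1 × S2 × W × W3) × (Fin n → Y) × (Fin n → Y3) => ((fun j => (ω.1 j).2.2.1), (ω.2.2, ((fun j => (ω.1 j).1), ((fun j => (ω.1 j).2.1), (fun j => (ω.1 j).2.2.2))))))
            - Hent (mabrcLaw src ch c) (fun ω : (Fin m → S1 × S2 × W × W3) × (Fin n → Y) × (Fin n → Y3) => (ω.2.2, ((fun j => (ω.1 j).1), ((fun j => (ω.1 j).2.1), (fun j => (ω.1 j).2.2.2)))))) := rfl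
    have q1 : Hent (mabrcLaw src ch c) (fun ω : (Fin m → S1 × S2 × W × W3) × (Fin n → Y) × (Fin n → Y3) => (((fun j => (ω.1 j).1), (fun j => (ω.1 j).2.2.1)), ((fun j => (ω.1 j).2.1), (fun j => (ω.1 j).2.2.2))))
        = Hent (mabrcLaw src ch c) (fun ω : (Fin m → S1 × S2 × W × W3) × (Fin n → Y) × (Fin n → Y3) => ((fun j => (ω.1 j).2.2.1), ((fun j => (ω.1 j).1), ((fun j => (ω.1 j).2.1), (fun j => (ω.1 j).2.2.2))))) := by
      refine Hent_eq_of_inj (fun ω : (Fin m → S1 × S2 × W × W3) × (Fin n → Y) × (Fin n → Y3) => ((fun j => (ω.1 j).1), ((fun j => (ω.1 j).2.2.1), ((fun j => (ω.1 j).2.1), (fun j => (ω.1 j).2.2.2)))))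
        (fun v => ((v.1, v.2.1), v.2.2)) (fun v => (v.2.1, (v.1, v.2.2))) ?_ ?_ <;>
      · rintro ⟨a, b, z⟩ ⟨a', b', z'⟩ h
        simp only [Prod.mk.injEq] at h ⊢
        tauto
    have q2 : Hent (mabrcLaw src ch c) (fun ω : (Fin m → S1 × S2 × W × W3) × (Fin n → Y) × (Fin n → Y3) => (((fun j => (ω.1 j).1), (fun j => (ω.1 j).2.2.1)), (ω.2.2, ((fun j => (ω.1 j).2.1), (fun j => (ω.1 j).2.2.2)))))
        = Hent (mabrcLaw src ch c) (fun ω : (Fin m → S1 × S2 × W × W3) × (Fin n → Y) × (Fin n → Y3) => ((fun j => (ω.1 j).2.2.1), (ω.2.2, ((fun j => (ω.1 j).1), ((fun j => (ω.1 j).2.1), (fun j => (ω.1 j).2.2.2)))))) := by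
      refine Hent_eq_of_inj (fun ω : (Fin m → S1 × S2 × W × W3) × (Fin n → Y) × (Fin n → Y3) => ((fun j => (ω.1 j).1), ((fun j => (ω.1 j).2.2.1), (ω.2.2, ((fun j => (ω.1 j).2.1), (fun j => (ω.1 j).2.2.2))))))
        (fun v => ((v.1, v.2.1), v.2.2)) (fun v => (v.2.1, (v.2.2.1, (v.1, v.2.2.2)))) ?_ ?_ <;>
      · rintro ⟨a, b, y, z⟩ ⟨a', b', y', z'⟩ h
        simp only [Prod.mk.injEq] at h ⊢
        tauto
    have q3 : Hent (mabrcLaw src ch c) (fun ω : (Fin m → S1 × S2 × W × W3) × (Fin n → Y) × (Fin n → Y3) => ((fun j => (ω.1 j).1), (ω.2.2, ((fun j => (ω.1 j).2.1), (fun j => (ω.1 j).2.2.2)))))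
        = Hent (mabrcLaw src ch c) (fun ω : (Fin m → S1 × S2 × W × W3) × (Fin n → Y) × (Fin n → Y3) => (ω.2.2, ((fun j => (ω.1 j).1), ((fun j => (ω.1 j).2.1), (fun j => (ω.1 j).2.2.2))))) := by
      refine Hent_eq_of_inj (fun ω : (Fin m → S1 × S2 × W × W3) × (Fin n → Y) × (Fin n → Y3) => ((fun j => (ω.1 j).1), (ω.2.2, ((fun j => (ω.1 j).2.1), (fun j => (ω.1 j).2.2.2)))))
        (fun v => v) (fun v => (v.2.1, (v.1, v.2.2))) (fun a b h => h) ?_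
      rintro ⟨a, y, z⟩ ⟨a', y', z'⟩ h
      simp only [Prod.mk.injEq] at h ⊢
      tauto
    linarith [h0, r1, r2, r3, r4, q1, q2, q3]


end ChainIneq

end Paper
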